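/- arXiv:1704.06035 — 6 statements merged into one kernel-verified Lean document; each statement's English description precedes it below -/
import Mathlib

section
/- Let (X, μ) be a measure space and f_1,…,f_n, g_1,…,g_n : X → ℂ be measurable functions such that all products f_i·g_j are integrable. Then (1/n!) ∫_{X^n} det(f_i(x_j)) · det(g_i(x_j)) dμ^n(x) = det(∫_X f_i(x) g_j(x) dμ(x)), where both determinants inside the integral are n×n determinants indexed by 1 ≤ i, j ≤ n. -/
open MeasureTheory

/-- The Cauchy–Binet / Andréief identity:
`(1/n!) ∫_{Xⁿ} det(fᵢ(xⱼ)) det(gᵢ(xⱼ)) dμⁿ(x) = det(∫_X fᵢ g_j dμ)`. -/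
theorem andreief_identity {X : Type*} [MeasurableSpace X] (μ : Measure X) [SigmaFinite μ]
    (n : ℕ) (f g : Fin n → X → ℂ)
    (hf : ∀ i, Measurable (f i)) (hg : ∀ i, Measurable (g i))
    (hint : ∀ i j, Integrable (fun x => f i x * g j x) μ) :
    (n.factorial : ℂ)⁻¹ *
        ∫ x : Fin n → X,
          (Matrix.det (Matrix.of fun i j : Fin n => f i (x j))) *
            (Matrix.det (Matrix.of fun i j : Fin n => g i (x j)))
          ∂(Measure.pi fun _ : Fin n => μ)
      = Matrix.det (Matrix.of fun i j : Fin n => ∫ x, f i x * g j x ∂μ) := by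
  letI : MeasureSpace X := ⟨μ⟩
  have hpi : (Measure.pi fun _ : Fin n => μ) = (volume : Measure (Fin n → X)) := rfl
  set ε : Equiv.Perm (Fin n) → ℂ := fun σ => ((Equiv.Perm.sign σ : ℤ) : ℂ) with hε
  set A : Matrix (Fin n) (Fin n) ℂ := Matrix.of fun i j => ∫ x, f i x * g j x ∂μ with hA
  have hε2 : ∀ σ, ε σ * ε σ = 1 := by
    intro σ
    rcases Int.units_eq_one_or (Equiv.Perm.sign σ) with h | h <;> simp [hε, h]
  have hterm_eq : ∀ (σ τ : Equiv.Perm (Fin n)),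
      (fun x : Fin n → X =>
        (ε σ * ∏ j, f (σ j) (x j)) * (ε τ * ∏ j, g (τ j) (x j)))
      = fun x => (ε σ * ε τ) * ∏ j, (fun y => f (σ j) y * g (τ j) y) (x j) := by
    intro σ τ
    funext x
    rw [mul_mul_mul_comm, ← Finset.prod_mul_distrib]
  have hint' : ∀ (σ τ : Equiv.Perm (Fin n)),
      Integrable (fun x : Fin n → X =>
        (ε σ * ∏ j, f (σ j) (x j)) * (ε τ * ∏ j, g (τ j) (x j))) := by
    intro σ τ
    rw [hterm_eq]
    exact (Integrable.fintype_prod (fun j => hint (σ j) (τ j))).const_mul _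
  have hval : ∀ (σ τ : Equiv.Perm (Fin n)),
      ∫ x : Fin n → X,
        (ε σ * ∏ j, f (σ j) (x j)) * (ε τ * ∏ j, g (τ j) (x j))
      = ε σ * ε τ * ∏ j, A (σ j) (τ j) := by
    intro σ τ
    rw [hterm_eq, integral_const_mul]
    exact congrArg _ (MeasureTheory.integral_fintype_prod_eq_prod (ι := Fin n) (E := fun _ => X)
        (fun j y => f (σ j) y * g (τ j) y) (μ := fun _ => μ))
  have key : ∫ x : Fin n → X,
      (Matrix.det (Matrix.of fun i j : Fin n => f i (x j))) *
        (Matrix.det (Matrix.of fun i j : Fin n => g i (x j)))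
      ∂(Measure.pi fun _ : Fin n => μ)
    = (n.factorial : ℂ) * A.det := by
    simp_rw [Matrix.det_apply', Matrix.of_apply, Finset.sum_mul_sum]
    rw [hpi]
    rw [integral_finset_sum _ (fun σ _ => integrable_finset_sum _ (fun τ _ => hint' σ τ))]
    simp_rw [integral_finset_sum _ (fun τ _ => hint' _ τ), hval]
    have inner : ∀ σ : Equiv.Perm (Fin n),
        ∑ τ : Equiv.Perm (Fin n), ε σ * ε τ * ∏ j, A (σ j) (τ j) = A.det := by
      intro σ
      rw [← Equiv.sum_comp (Equiv.mulRight σ)]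
      simp only [Equiv.coe_mulRight, Equiv.Perm.mul_apply]
      have : ∀ π : Equiv.Perm (Fin n),
          ε σ * ε (π * σ) * ∏ j, A (σ j) (π (σ j)) = ε π * ∏ i, A i (π i) := by
        intro π
        have hsgn : ε (π * σ) = ε π * ε σ := by
          simp [hε, ← Int.cast_mul]
        have hprod : ∏ j, A (σ j) (π (σ j)) = ∏ i, A i (π i) :=
          Equiv.prod_comp σ (fun i => A i (π i))
        rw [hsgn, hprod]
        calc ε σ * (ε π * ε σ) * ∏ i, A i (π i)
            = (ε σ * ε σ) * (ε π * ∏ i, A i (π i)) := by ring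
          _ = ε π * ∏ i, A i (π i) := by rw [hε2, one_mul]
      simp_rw [this]
      rw [← Matrix.det_transpose A, Matrix.det_apply']
      rfl
    simp_rw [inner]
    rw [Finset.sum_const, ← Matrix.det_apply' A]
    simp [Finset.card_univ, Fintype.card_perm, nsmul_eq_mul]
  rw [key, ← mul_assoc, inv_mul_cancel₀ (by exact_mod_cast n.factorial_ne_zero), one_mul]
end

section
/- Let a, b ∈ ℂ with |a| < 1 and |b| < 1, and let φ^+(ζ) and φ^−(ζ) be functions on an annulus with φ^+ analytic and nonzero in |ζ| < 1+ε with φ^+(0) = 1, and φ^− analytic and nonzero in |ζ| > 1−ε (including ∞) with φ^−(∞) = 1. Writing c_j^+ for the j-th Fourier coefficient of 1/φ^+ (which vanishes for j < 0) and c_j^− for the j-th Fourier coefficient of 1/φ^− (which vanishes for j > 0), the double series ∑_{i,j=1}^∞ z^j (∑_{k=1}^∞ c^+_{j−k} c^−_{k−i}) w^{−i} converges to (z/(w−z)) · 1/(φ^+(z) φ^−(w)) whenever |z| < |w|, z in the domain of analyticity of φ^+ and w in that of φ^−. -/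
open Complex

/-- The key summation identity for the inverse of an infinite Toeplitz operator with
Wiener–Hopf factorized symbol `φ = φ⁺ φ⁻`:  writing `c⁺` (resp. `c⁻`) for the Fourier
coefficients of `1/φ⁺` (vanishing for negative index) resp. of `1/φ⁻` (vanishing for
positive index), one has, for `|z| < |w|` in the respective domains of analyticity,
`∑_{i,j ≥ 1} z^j (∑_{k ≥ 1} c⁺_{j-k} c⁻_{k-i}) w^{-i} = (z/(w-z)) · 1/(φ⁺(z) φ⁻(w))`. -/
theorem toeplitz_inverse_summation
    (ε : ℝ) (hε : 0 < ε) (φp φm : ℂ → ℂ) (cp cm : ℤ → ℂ)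
    (hφp : DifferentiableOn ℂ φp (Metric.ball 0 (1 + ε)))
    (hφpne : ∀ z ∈ Metric.ball (0 : ℂ) (1 + ε), φp z ≠ 0)
    (hφp0 : φp 0 = 1)
    (hφm : DifferentiableOn ℂ φm {w : ℂ | 1 - ε < ‖w‖})
    (hφmne : ∀ w : ℂ, 1 - ε < ‖w‖ → φm w ≠ 0)
    (hφminf : Filter.Tendsto φm (Bornology.cobounded ℂ) (nhds 1))
    (hcp0 : ∀ j : ℤ, j < 0 → cp j = 0)
    (hcm0 : ∀ j : ℤ, 0 < j → cm j = 0)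
    (hcp : ∀ z ∈ Metric.ball (0 : ℂ) (1 + ε),
      HasSum (fun k : ℕ => cp k * z ^ k) (1 / φp z))
    (hcm : ∀ w : ℂ, 1 - ε < ‖w‖ →
      HasSum (fun k : ℕ => cm (-(k : ℤ)) * w ^ (-(k : ℤ))) (1 / φm w))
    (z w : ℂ) (hz : ‖z‖ < 1 + ε) (hw : 1 - ε < ‖w‖)
    (hzw : ‖z‖ < ‖w‖) :
    HasSum
      (fun p : ℕ × ℕ =>
        (∑' k : ℕ, cp ((p.1 : ℤ) + 1 - ((k : ℤ) + 1)) * cm (((k : ℤ) + 1) - ((p.2 : ℤ) + 1)))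
          * z ^ (p.1 + 1) * w ^ (-((p.2 : ℤ) + 1)))
      (z / (w - z) * (1 / (φp z * φm w))) := by
  have hwpos : 0 < ‖w‖ := lt_of_le_of_lt (norm_nonneg z) hzw
  have hw0 : w ≠ 0 := by simpa using hwpos.ne'
  have hwz : w - z ≠ 0 := by
    intro h
    rw [sub_eq_zero] at h
    exact lt_irrefl _ (h ▸ hzw)
  have hzw' : ‖z / w‖ < 1 := by
    rw [norm_div]
    exact (div_lt_one hwpos).2 hzw
  -- the three one-dimensional series
  have hp : HasSum (fun a : ℕ => cp a * z ^ a) (1 / φp z) :=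
    hcp z (by simpa [Metric.mem_ball] using hz)
  have hm : HasSum (fun b : ℕ => cm (-(b : ℤ)) * w ^ (-(b : ℤ))) (1 / φm w) := hcm w hw
  have hg : HasSum (fun k : ℕ => (z / w) ^ (k + 1)) (z / (w - z)) := by
    have h1 := (hasSum_geometric_of_norm_lt_one hzw').mul_left (z / w)
    have h2 : (z / w) * (1 - z / w)⁻¹ = z / (w - z) := by
      field_simp
    have h3 : (fun k : ℕ => (z / w) ^ (k + 1)) = fun k : ℕ => (z / w) * (z / w) ^ k := by
      funext k; ring
    rw [h3, ← h2]
    exact h1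
  -- product of the two coefficient series
  have hpm : HasSum (fun x : ℕ × ℕ =>
      (cp x.1 * z ^ x.1) * (cm (-(x.2 : ℤ)) * w ^ (-(x.2 : ℤ))))
      ((1 / φp z) * (1 / φm w)) := by
    have h1 : Summable (fun a : ℕ => ‖cp a * z ^ a‖) := summable_norm_iff.2 hp.summable
    have h2 : Summable (fun b : ℕ => ‖cm (-(b : ℤ)) * w ^ (-(b : ℤ))‖) :=
      summable_norm_iff.2 hm.summable
    have h3 := summable_mul_of_summable_norm h1 h2
    have hts := tsum_mul_tsum_of_summable_norm h1 h2
    rw [hp.tsum_eq, hm.tsum_eq] at hts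
    rw [hts]
    exact h3.hasSum
  -- triple product
  have htriple : HasSum (fun x : ℕ × (ℕ × ℕ) =>
      (z / w) ^ (x.1 + 1) *
        ((cp x.2.1 * z ^ x.2.1) * (cm (-(x.2.2 : ℤ)) * w ^ (-(x.2.2 : ℤ)))))
      (z / (w - z) * ((1 / φp z) * (1 / φm w))) := by
    have h1 : Summable (fun k : ℕ => ‖(z / w) ^ (k + 1)‖) := summable_norm_iff.2 hg.summable
    have h2 : Summable (fun x : ℕ × ℕ =>
        ‖(cp x.1 * z ^ x.1) * (cm (-(x.2 : ℤ)) * w ^ (-(x.2 : ℤ)))‖) :=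
      summable_norm_iff.2 hpm.summable
    have h3 := summable_mul_of_summable_norm h1 h2
    have hts := tsum_mul_tsum_of_summable_norm h1 h2
    rw [hg.tsum_eq, hpm.tsum_eq] at hts
    rw [hts]
    exact h3.hasSum
  -- F : individual Toeplitz terms
  set F : (ℕ × ℕ) × ℕ → ℂ := fun x =>
    cp ((x.1.1 : ℤ) + 1 - ((x.2 : ℤ) + 1)) * cm (((x.2 : ℤ) + 1) - ((x.1.2 : ℤ) + 1))
      * z ^ (x.1.1 + 1) * w ^ (-((x.1.2 : ℤ) + 1)) with hF
  set e : ℕ × (ℕ × ℕ) → (ℕ × ℕ) × ℕ := fun x => ((x.2.1 + x.1, x.2.2 + x.1), x.1) with he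
  have hinj : Function.Injective e := by
    rintro ⟨k, a, b⟩ ⟨k', a', b'⟩ h
    simp only [he, Prod.mk.injEq] at h
    obtain ⟨⟨h1, h2⟩, h3⟩ := h
    subst h3
    simp at h1 h2
    simp [h1, h2]
  have hrange : ∀ x ∉ Set.range e, F x = 0 := by
    rintro ⟨⟨p1, p2⟩, k⟩ hx
    by_cases h1 : k ≤ p1
    · by_cases h2 : k ≤ p2
      · exact absurd ⟨(k, (p1 - k, p2 - k)), by simp [he]; omega⟩ hx
      · have h0 : cm (((k : ℤ) + 1) - ((p2 : ℤ) + 1)) = 0 := hcm0 _ (by push_cast; omega)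
        show cp ((p1 : ℤ) + 1 - ((k : ℤ) + 1)) * cm (((k : ℤ) + 1) - ((p2 : ℤ) + 1))
          * z ^ (p1 + 1) * w ^ (-((p2 : ℤ) + 1)) = 0
        rw [h0, mul_zero, zero_mul, zero_mul]
    · have h0 : cp ((p1 : ℤ) + 1 - ((k : ℤ) + 1)) = 0 := hcp0 _ (by push_cast; omega)
      show cp ((p1 : ℤ) + 1 - ((k : ℤ) + 1)) * cm (((k : ℤ) + 1) - ((p2 : ℤ) + 1))
        * z ^ (p1 + 1) * w ^ (-((p2 : ℤ) + 1)) = 0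
      rw [h0, zero_mul, zero_mul, zero_mul]
  have hFe : ∀ x : ℕ × (ℕ × ℕ), (F ∘ e) x =
      (z / w) ^ (x.1 + 1) *
        ((cp x.2.1 * z ^ x.2.1) * (cm (-(x.2.2 : ℤ)) * w ^ (-(x.2.2 : ℤ)))) := by
    rintro ⟨k, a, b⟩
    show cp (((a + k : ℕ) : ℤ) + 1 - ((k : ℤ) + 1)) * cm (((k : ℤ) + 1) - (((b + k : ℕ) : ℤ) + 1))
        * z ^ ((a + k) + 1) * w ^ (-(((b + k : ℕ) : ℤ) + 1)) = _
    have h1 : ((a + k : ℕ) : ℤ) + 1 - ((k : ℤ) + 1) = (a : ℤ) := by push_cast; ring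
    have h2 : ((k : ℤ) + 1) - (((b + k : ℕ) : ℤ) + 1) = -((b : ℕ) : ℤ) := by push_cast; ring
    have h3 : (-(((b + k : ℕ) : ℤ) + 1)) = -((b + k + 1 : ℕ) : ℤ) := by push_cast; ring
    rw [h1, h2, h3, zpow_neg, zpow_natCast, zpow_neg, zpow_natCast, div_pow]
    have hwn : ∀ n : ℕ, w ^ n ≠ 0 := fun n => pow_ne_zero n hw0
    field_simp
    ring
  have hFsum : HasSum F (z / (w - z) * ((1 / φp z) * (1 / φm w))) := by
    rw [← hinj.hasSum_iff hrange]
    have heq : (fun x : ℕ × (ℕ × ℕ) =>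
        (z / w) ^ (x.1 + 1) *
          ((cp x.2.1 * z ^ x.2.1) * (cm (-(x.2.2 : ℤ)) * w ^ (-(x.2.2 : ℤ))))) = F ∘ e :=
      (funext hFe).symm
    rw [heq] at htriple
    exact htriple
  have hfib : ∀ p : ℕ × ℕ, HasSum (fun k : ℕ => F (p, k))
      ((∑' k : ℕ, cp ((p.1 : ℤ) + 1 - ((k : ℤ) + 1)) * cm (((k : ℤ) + 1) - ((p.2 : ℤ) + 1)))
        * z ^ (p.1 + 1) * w ^ (-((p.2 : ℤ) + 1))) := by
    rintro ⟨p1, p2⟩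
    have hsupp : ∀ k ∉ Finset.range (p2 + 1),
        cp ((p1 : ℤ) + 1 - ((k : ℤ) + 1)) * cm (((k : ℤ) + 1) - ((p2 : ℤ) + 1)) = 0 := by
      intro k hk
      simp only [Finset.mem_range, not_lt] at hk
      have h0 : cm (((k : ℤ) + 1) - ((p2 : ℤ) + 1)) = 0 := hcm0 _ (by push_cast; omega)
      rw [h0, mul_zero]
    have hS : HasSum (fun k : ℕ =>
        cp ((p1 : ℤ) + 1 - ((k : ℤ) + 1)) * cm (((k : ℤ) + 1) - ((p2 : ℤ) + 1)))
        (∑' k : ℕ, cp ((p1 : ℤ) + 1 - ((k : ℤ) + 1)) * cm (((k : ℤ) + 1) - ((p2 : ℤ) + 1))) :=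
      (summable_of_ne_finset_zero hsupp).hasSum
    exact (hS.mul_right (z ^ (p1 + 1))).mul_right (w ^ (-((p2 : ℤ) + 1)))
  have hfinal := hFsum.prod_fiberwise hfib
  convert hfinal using 2
  rw [one_div, one_div, one_div, mul_inv]
end

section
/- Let f ∈ L^1 of the unit circle, n ≥ 1, and z, w ∈ ℂ with w ≠ 0. Assume the n×n Toeplitz matrix T_n(f) = (f̂(j−k))_{1≤j,k≤n} is invertible, where f̂(m) denotes the m-th Fourier coefficient of f. Then ∑_{i,j=1}^n z^j (T_n(f)^{−1})_{ji} w^{−i} = (z/w) · D_{n−1}[(1−ζ/w)(1−z/ζ) f(ζ)] / D_n[f(ζ)], where D_m[g(ζ)] denotes the m×m Toeplitz determinant det(ĝ(j−k))_{1≤j,k≤m} with symbol g. -/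
open Complex intervalIntegral

/-- The `m`-th Fourier coefficient of a symbol `f` on the unit circle,
`f̂(m) = (1/2π) ∫₀^{2π} f(e^{iθ}) e^{-imθ} dθ = (1/2πi) ∮_{|ζ|=1} ζ^{-m} f(ζ) dζ/ζ`. -/
noncomputable def symbolFourierCoeff (f : ℂ → ℂ) (m : ℤ) : ℂ :=
  (1 / (2 * Real.pi)) *
    ∫ θ in (0 : ℝ)..(2 * Real.pi),
      f (Complex.exp (θ * Complex.I)) * Complex.exp (-(m : ℂ) * θ * Complex.I)

namespace FiniteToeplitzAux

open Matrix Finset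

/-- Lower bidiagonal matrix `P = I - w⁻¹ S`. -/
noncomputable def Pm (w : ℂ) (m : ℕ) : Matrix (Fin (m+1)) (Fin (m+1)) ℂ :=
  Matrix.of fun j k => if (j:ℕ) = (k:ℕ) then 1 else if (j:ℕ) = (k:ℕ)+1 then -w⁻¹ else 0

/-- Its inverse. -/
noncomputable def Pm' (w : ℂ) (m : ℕ) : Matrix (Fin (m+1)) (Fin (m+1)) ℂ :=
  Matrix.of fun j k => if (k:ℕ) ≤ (j:ℕ) then w⁻¹ ^ ((j:ℕ) - (k:ℕ)) else 0

/-- Upper bidiagonal matrix `Q = I - z Sᵀ`. -/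
noncomputable def Qm (z : ℂ) (m : ℕ) : Matrix (Fin (m+1)) (Fin (m+1)) ℂ :=
  Matrix.of fun j k => if (j:ℕ) = (k:ℕ) then 1 else if (j:ℕ)+1 = (k:ℕ) then -z else 0

/-- Its inverse. -/
noncomputable def Qm' (z : ℂ) (m : ℕ) : Matrix (Fin (m+1)) (Fin (m+1)) ℂ :=
  Matrix.of fun j k => if (j:ℕ) ≤ (k:ℕ) then z ^ ((k:ℕ) - (j:ℕ)) else 0

variable {m : ℕ} (z w : ℂ)

lemma sumP_zero (g : Fin (m+1) → ℂ) : ∑ l, Pm w m 0 l * g l = g 0 := by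
  have h : ∀ l : Fin (m+1), Pm w m 0 l * g l = if l = 0 then g l else 0 := by
    intro l
    simp only [Pm, Matrix.of_apply, Fin.ext_iff, Fin.val_zero]
    split_ifs <;> first | ring1 | omega | (exfalso; omega) | simp_all
  rw [Finset.sum_congr rfl fun l _ => h l]
  simp

lemma sumP_succ (a : Fin m) (g : Fin (m+1) → ℂ) :
    ∑ l, Pm w m a.succ l * g l = g a.succ - w⁻¹ * g a.castSucc := by
  have h : ∀ l : Fin (m+1), Pm w m a.succ l * g l =
      (if l = a.succ then g l else 0) + (if l = a.castSucc then -w⁻¹ * g l else 0) := by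
    intro l
    simp only [Pm, Matrix.of_apply, Fin.ext_iff, Fin.val_succ, Fin.coe_castSucc]
    split_ifs <;> first | ring1 | omega | (exfalso; omega) | simp_all
  rw [Finset.sum_congr rfl fun l _ => h l, Finset.sum_add_distrib]
  simp only [Finset.sum_ite_eq', Finset.mem_univ, if_true]
  ring

lemma sumQcol_succ (b : Fin m) (g : Fin (m+1) → ℂ) :
    ∑ l, g l * Qm z m l b.succ = g b.succ - z * g b.castSucc := by
  have h : ∀ l : Fin (m+1), g l * Qm z m l b.succ =
      (if l = b.succ then g l else 0) + (if l = b.castSucc then -z * g l else 0) := by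
    intro l
    simp only [Qm, Matrix.of_apply, Fin.ext_iff, Fin.val_succ, Fin.coe_castSucc]
    split_ifs <;> first | ring1 | omega | (exfalso; omega) | simp_all
  rw [Finset.sum_congr rfl fun l _ => h l, Finset.sum_add_distrib]
  simp only [Finset.sum_ite_eq', Finset.mem_univ, if_true]
  ring

lemma sumQrow_castSucc (a : Fin m) (g : Fin (m+1) → ℂ) :
    ∑ l, Qm z m a.castSucc l * g l = g a.castSucc - z * g a.succ := by
  have h : ∀ l : Fin (m+1), Qm z m a.castSucc l * g l =
      (if l = a.castSucc then g l else 0) + (if l = a.succ then -z * g l else 0) := by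
    intro l
    simp only [Qm, Matrix.of_apply, Fin.ext_iff, Fin.val_succ, Fin.coe_castSucc]
    split_ifs <;> first | ring1 | omega | (exfalso; omega) | simp_all
  rw [Finset.sum_congr rfl fun l _ => h l, Finset.sum_add_distrib]
  simp only [Finset.sum_ite_eq', Finset.mem_univ, if_true]
  ring

lemma sumQrow_last (g : Fin (m+1) → ℂ) :
    ∑ l, Qm z m (Fin.last m) l * g l = g (Fin.last m) := by
  have h : ∀ l : Fin (m+1), Qm z m (Fin.last m) l * g l =
      if l = Fin.last m then g l else 0 := by
    intro l
    have hl : (l : ℕ) ≤ m := Nat.lt_succ_iff.mp l.isLt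
    simp only [Qm, Matrix.of_apply, Fin.ext_iff, Fin.val_last]
    split_ifs <;> first | ring1 | omega | (exfalso; omega) | simp_all
  rw [Finset.sum_congr rfl fun l _ => h l]
  simp

lemma hPP' : Pm w m * Pm' w m = 1 := by
  ext j k
  rw [Matrix.mul_apply]
  refine Fin.cases ?_ (fun a => ?_) j
  · rw [sumP_zero]
    simp only [Pm', Matrix.of_apply, Matrix.one_apply, Fin.ext_iff, Fin.val_zero]
    by_cases hk : (k:ℕ) = 0
    · rw [if_pos (by omega)]; simp only [hk, le_refl, if_true, Nat.sub_self]
      norm_num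
    · rw [if_neg (by omega)]; simp only [show ¬ (k:ℕ) ≤ 0 by omega, if_false]
  · rw [sumP_succ]
    simp only [Pm', Matrix.of_apply, Matrix.one_apply, Fin.ext_iff, Fin.val_succ,
      Fin.coe_castSucc]
    by_cases h1 : (k:ℕ) ≤ (a:ℕ)
    · rw [if_pos (by omega), if_pos h1, if_neg (by omega)]
      have he : (a:ℕ)+1 - (k:ℕ) = ((a:ℕ) - (k:ℕ)) + 1 := by omega
      rw [he, pow_succ']
      ring
    · by_cases h2 : (k:ℕ) = (a:ℕ)+1
      · rw [if_pos (by omega), if_neg h1, if_pos (by omega)]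
        have he : (a:ℕ)+1 - (k:ℕ) = 0 := by omega
        rw [he, pow_zero]
        ring
      · rw [if_neg (by omega), if_neg h1, if_neg (by omega)]
        ring

lemma hQQ' : Qm z m * Qm' z m = 1 := by
  ext j k
  rw [Matrix.mul_apply]
  refine Fin.lastCases ?_ (fun a => ?_) j
  · rw [sumQrow_last]
    have hk : (k:ℕ) ≤ m := Nat.lt_succ_iff.mp k.isLt
    simp only [Qm', Matrix.of_apply, Matrix.one_apply, Fin.ext_iff, Fin.val_last]
    by_cases h1 : (k:ℕ) = m
    · rw [if_pos (by omega), if_pos (by omega)]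
      have he : (k:ℕ) - m = 0 := by omega
      rw [he, pow_zero]
    · rw [if_neg (by omega), if_neg (by omega)]
  · rw [sumQrow_castSucc]
    simp only [Qm', Matrix.of_apply, Matrix.one_apply, Fin.ext_iff, Fin.val_succ,
      Fin.coe_castSucc]
    by_cases h1 : (a:ℕ)+1 ≤ (k:ℕ)
    · rw [if_pos (by omega), if_pos h1, if_neg (by omega)]
      have he : (k:ℕ) - (a:ℕ) = ((k:ℕ) - ((a:ℕ)+1)) + 1 := by omega
      rw [he, pow_succ']
      ring
    · by_cases h2 : (k:ℕ) = (a:ℕ)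
      · rw [if_pos (by omega), if_neg h1, if_pos (by omega)]
        have he : (k:ℕ) - (a:ℕ) = 0 := by omega
        rw [he, pow_zero]
        ring
      · rw [if_neg (by omega), if_neg h1, if_neg (by omega)]
        ring

lemma detP : (Pm w m).det = 1 := by
  have hbt : (Pm w m).BlockTriangular OrderDual.toDual := by
    intro i j hij
    have h : (i:ℕ) < (j:ℕ) := hij
    simp only [Pm, Matrix.of_apply]
    rw [if_neg (by omega), if_neg (by omega)]
  rw [Matrix.det_of_lowerTriangular _ hbt]
  simp [Pm]

lemma detQ : (Qm z m).det = 1 := by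
  have hbt : (Qm z m).BlockTriangular id := by
    intro i j hij
    have h : (j:ℕ) < (i:ℕ) := hij
    simp only [Qm, Matrix.of_apply]
    rw [if_neg (by omega), if_neg (by omega)]
  rw [Matrix.det_of_upperTriangular hbt]
  simp [Qm]

lemma adj00 (A : Matrix (Fin (m+1)) (Fin (m+1)) ℂ) :
    A.adjugate 0 0 = (A.submatrix Fin.succ Fin.succ).det := by
  rw [Matrix.adjugate_apply, Matrix.det_succ_row_zero, Fin.sum_univ_succ]
  simp only [Matrix.updateRow_self, Pi.single_eq_same, Fin.val_zero, pow_zero, one_mul,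
    Fin.succAbove_zero, Fin.val_succ, Pi.single_eq_of_ne (Fin.succ_ne_zero _), mul_zero,
    zero_mul, Finset.sum_const_zero, add_zero]
  congr 1

lemma Mentry (c : ℤ → ℂ) (a b : Fin m) :
    (Pm w m * (Matrix.of fun j k : Fin (m+1) => c ((j:ℤ) - (k:ℤ))) * Qm z m) a.succ b.succ
      = (1 + z/w) * c ((a:ℤ) - (b:ℤ)) - z * c ((a:ℤ) - (b:ℤ) + 1)
        - w⁻¹ * c ((a:ℤ) - (b:ℤ) - 1) := by
  rw [Matrix.mul_apply, sumQcol_succ, Matrix.mul_apply, Matrix.mul_apply, sumP_succ, sumP_succ]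
  simp only [Matrix.of_apply, Fin.val_succ, Fin.coe_castSucc]
  push_cast
  have e1 : ((a:ℤ) + 1) - ((b:ℤ) + 1) = (a:ℤ) - (b:ℤ) := by ring
  have e2 : (a:ℤ) - ((b:ℤ) + 1) = (a:ℤ) - (b:ℤ) - 1 := by ring
  have e3 : ((a:ℤ) + 1) - (b:ℤ) = (a:ℤ) - (b:ℤ) + 1 := by ring
  rw [e1, e2, e3]
  ring

/-- The purely algebraic part of the finite Toeplitz inversion identity. -/
theorem aux (m : ℕ) (c : ℤ → ℂ) (z w : ℂ) :
    ∑ j : Fin (m+1), ∑ i : Fin (m+1),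
        z ^ ((j : ℕ) + 1) *
          (Matrix.of fun j' k' : Fin (m+1) => c ((j' : ℤ) - (k' : ℤ)))⁻¹ j i *
          w ^ (-(((i : ℕ) : ℤ) + 1))
      = z / w *
          (Matrix.of fun a b : Fin m =>
            (1 + z/w) * c ((a:ℤ) - (b:ℤ)) - z * c ((a:ℤ) - (b:ℤ) + 1)
              - w⁻¹ * c ((a:ℤ) - (b:ℤ) - 1)).det /
          (Matrix.of fun j' k' : Fin (m+1) => c ((j' : ℤ) - (k' : ℤ))).det := by
  set T : Matrix (Fin (m+1)) (Fin (m+1)) ℂ :=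
    Matrix.of fun j' k' : Fin (m+1) => c ((j' : ℤ) - (k' : ℤ)) with hTdef
  have hPinv : (Pm w m)⁻¹ = Pm' w m := Matrix.inv_eq_right_inv (hPP' w)
  have hQinv : (Qm z m)⁻¹ = Qm' z m := Matrix.inv_eq_right_inv (hQQ' z)
  set M : Matrix (Fin (m+1)) (Fin (m+1)) ℂ := Pm w m * T * Qm z m with hMdef
  have hdetM : M.det = T.det := by
    rw [hMdef, Matrix.det_mul, Matrix.det_mul, detP, detQ, one_mul, mul_one]
  have hMinv : M⁻¹ = Qm' z m * (T⁻¹ * Pm' w m) := by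
    rw [hMdef, Matrix.mul_inv_rev, Matrix.mul_inv_rev, hPinv, hQinv]
  have hM00 : M⁻¹ 0 0
      = ∑ j : Fin (m+1), ∑ i : Fin (m+1), z ^ (j:ℕ) * T⁻¹ j i * w⁻¹ ^ (i:ℕ) := by
    rw [hMinv, Matrix.mul_apply]
    refine Finset.sum_congr rfl fun j _ => ?_
    rw [Matrix.mul_apply, Finset.mul_sum]
    refine Finset.sum_congr rfl fun i _ => ?_
    simp only [Qm', Pm', Matrix.of_apply, Fin.val_zero]
    simp only [Nat.zero_le, if_true, Nat.sub_zero]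
    ring
  have hsub : M.submatrix Fin.succ Fin.succ
      = Matrix.of fun a b : Fin m =>
          (1 + z/w) * c ((a:ℤ) - (b:ℤ)) - z * c ((a:ℤ) - (b:ℤ) + 1)
            - w⁻¹ * c ((a:ℤ) - (b:ℤ) - 1) := by
    ext a b
    exact Mentry z w c a b
  have hM00' : M⁻¹ 0 0 = (T.det)⁻¹ *
      (Matrix.of fun a b : Fin m =>
          (1 + z/w) * c ((a:ℤ) - (b:ℤ)) - z * c ((a:ℤ) - (b:ℤ) + 1)
            - w⁻¹ * c ((a:ℤ) - (b:ℤ) - 1)).det := by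
    rw [Matrix.inv_def, Matrix.smul_apply, adj00, hsub, hdetM, smul_eq_mul,
      Ring.inverse_eq_inv]
  have hterm : ∀ j i : Fin (m+1),
      z ^ ((j:ℕ) + 1) * T⁻¹ j i * w ^ (-(((i:ℕ):ℤ) + 1))
        = z * w⁻¹ * (z ^ (j:ℕ) * T⁻¹ j i * w⁻¹ ^ (i:ℕ)) := by
    intro j i
    have hzw : w ^ (-(((i:ℕ):ℤ) + 1)) = w⁻¹ * w⁻¹ ^ (i:ℕ) := by
      rw [show -(((i:ℕ):ℤ) + 1) = -((((i:ℕ) + 1 : ℕ)) : ℤ) by push_cast; ring,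
        _root_.zpow_neg, zpow_natCast, ← inv_pow, pow_succ']
    rw [hzw, pow_succ]
    ring
  calc ∑ j : Fin (m+1), ∑ i : Fin (m+1),
        z ^ ((j:ℕ) + 1) * T⁻¹ j i * w ^ (-(((i:ℕ):ℤ) + 1))
      = ∑ j : Fin (m+1), ∑ i : Fin (m+1),
          z * w⁻¹ * (z ^ (j:ℕ) * T⁻¹ j i * w⁻¹ ^ (i:ℕ)) := by
        exact Finset.sum_congr rfl fun j _ => Finset.sum_congr rfl fun i _ => hterm j i
    _ = z * w⁻¹ * (M⁻¹ 0 0) := by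
        rw [hM00, Finset.mul_sum]
        exact Finset.sum_congr rfl fun j _ => by rw [Finset.mul_sum]
    _ = _ := by
        rw [hM00', div_eq_mul_inv, div_eq_mul_inv]
        ring

end FiniteToeplitzAux

lemma finite_toeplitz_coeff (f : ℂ → ℂ)
    (hf : IntervalIntegrable (fun θ : ℝ => f (Complex.exp (θ * Complex.I)))
      MeasureTheory.volume 0 (2 * Real.pi))
    (z w : ℂ) (k : ℤ) :
    symbolFourierCoeff (fun ζ => (1 - ζ / w) * (1 - z / ζ) * f ζ) k
      = (1 + z/w) * symbolFourierCoeff f k - z * symbolFourierCoeff f (k+1)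
        - w⁻¹ * symbolFourierCoeff f (k-1) := by
  have hF : ∀ j : ℤ, IntervalIntegrable
      (fun θ : ℝ => f (Complex.exp (θ * Complex.I)) * Complex.exp (-(j:ℂ) * θ * Complex.I))
      MeasureTheory.volume 0 (2 * Real.pi) := by
    intro j
    exact hf.mul_continuousOn (Continuous.continuousOn (by fun_prop))
  have key : ∀ θ : ℝ,
      (1 - Complex.exp (θ * Complex.I) / w) * (1 - z / Complex.exp (θ * Complex.I)) *
          f (Complex.exp (θ * Complex.I)) * Complex.exp (-(k:ℂ) * θ * Complex.I)
        = (1 + z/w) * (f (Complex.exp (θ * Complex.I)) * Complex.exp (-(k:ℂ) * θ * Complex.I))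
          - z * (f (Complex.exp (θ * Complex.I)) *
              Complex.exp (-((k+1 : ℤ):ℂ) * θ * Complex.I))
          - w⁻¹ * (f (Complex.exp (θ * Complex.I)) *
              Complex.exp (-((k-1 : ℤ):ℂ) * θ * Complex.I)) := by
    intro θ
    have hE : Complex.exp (θ * Complex.I) * Complex.exp (-(θ * Complex.I)) = 1 := by
      rw [← Complex.exp_add]; simp
    have h1 : Complex.exp (-((k+1 : ℤ):ℂ) * θ * Complex.I)
        = Complex.exp (-(k:ℂ) * θ * Complex.I) * Complex.exp (-(θ * Complex.I)) := by
      rw [← Complex.exp_add]; congr 1; push_cast; ring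
    have h2 : Complex.exp (-((k-1 : ℤ):ℂ) * θ * Complex.I)
        = Complex.exp (-(k:ℂ) * θ * Complex.I) * Complex.exp (θ * Complex.I) := by
      rw [← Complex.exp_add]; congr 1; push_cast; ring
    have h3 : z / Complex.exp (θ * Complex.I) = z * Complex.exp (-(θ * Complex.I)) := by
      rw [div_eq_mul_inv, ← Complex.exp_neg]
    rw [h1, h2, h3]
    linear_combination (z/w) * f (Complex.exp (θ * Complex.I)) *
      Complex.exp (-(k:ℂ) * θ * Complex.I) * hE
  simp only [symbolFourierCoeff]
  have hint : (∫ θ in (0:ℝ)..(2 * Real.pi),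
        (1 - Complex.exp (θ * Complex.I) / w) * (1 - z / Complex.exp (θ * Complex.I)) *
          f (Complex.exp (θ * Complex.I)) * Complex.exp (-(k:ℂ) * θ * Complex.I))
      = (1 + z/w) * (∫ θ in (0:ℝ)..(2 * Real.pi),
            f (Complex.exp (θ * Complex.I)) * Complex.exp (-(k:ℂ) * θ * Complex.I))
        - z * (∫ θ in (0:ℝ)..(2 * Real.pi),
            f (Complex.exp (θ * Complex.I)) * Complex.exp (-((k+1 : ℤ):ℂ) * θ * Complex.I))
        - w⁻¹ * (∫ θ in (0:ℝ)..(2 * Real.pi),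
            f (Complex.exp (θ * Complex.I)) * Complex.exp (-((k-1 : ℤ):ℂ) * θ * Complex.I)) := by
    rw [intervalIntegral.integral_congr (g := fun θ =>
        (1 + z/w) * (f (Complex.exp (θ * Complex.I)) * Complex.exp (-(k:ℂ) * θ * Complex.I))
          - z * (f (Complex.exp (θ * Complex.I)) *
              Complex.exp (-((k+1 : ℤ):ℂ) * θ * Complex.I))
          - w⁻¹ * (f (Complex.exp (θ * Complex.I)) *
              Complex.exp (-((k-1 : ℤ):ℂ) * θ * Complex.I))) (fun θ _ => key θ)]
    rw [intervalIntegral.integral_sub, intervalIntegral.integral_sub,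
      intervalIntegral.integral_const_mul, intervalIntegral.integral_const_mul,
      intervalIntegral.integral_const_mul]
    · exact (hF k).const_mul _
    · exact (hF (k+1)).const_mul _
    · exact ((hF k).const_mul _).sub ((hF (k+1)).const_mul _)
    · exact (hF (k-1)).const_mul _
  rw [hint]
  ring

/-- The finite Toeplitz inversion identity: for `f ∈ L¹(𝕋)`, `n ≥ 1`, `z, w ∈ ℂ`
with `w ≠ 0`, and `T_n(f) = (f̂(j-k))_{1≤j,k≤n}` invertible,
`∑_{i,j=1}^n z^j (T_n(f)^{-1})_{ji} w^{-i}
  = (z/w) · D_{n-1}[(1-ζ/w)(1-z/ζ) f(ζ)] / D_n[f(ζ)]`,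
where `D_m[g] = det(ĝ(j-k))_{1≤j,k≤m}` is the Toeplitz determinant with symbol `g`. -/
theorem finite_toeplitz_inverse (f : ℂ → ℂ)
    (hf : IntervalIntegrable (fun θ : ℝ => f (Complex.exp (θ * Complex.I)))
      MeasureTheory.volume 0 (2 * Real.pi))
    (n : ℕ) (hn : 1 ≤ n) (z w : ℂ) (hw : w ≠ 0)
    (hT : IsUnit (Matrix.det (Matrix.of fun j k : Fin n =>
      symbolFourierCoeff f ((j : ℤ) - (k : ℤ))))) :
    ∑ j : Fin n, ∑ i : Fin n,
        z ^ ((j : ℕ) + 1) *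
          (Matrix.of fun j' k' : Fin n => symbolFourierCoeff f ((j' : ℤ) - (k' : ℤ)))⁻¹ j i *
          w ^ (-(((i : ℕ) : ℤ) + 1))
      = z / w *
          Matrix.det (Matrix.of fun j' k' : Fin (n - 1) =>
            symbolFourierCoeff (fun ζ => (1 - ζ / w) * (1 - z / ζ) * f ζ)
              ((j' : ℤ) - (k' : ℤ))) /
          Matrix.det (Matrix.of fun j' k' : Fin n =>
            symbolFourierCoeff f ((j' : ℤ) - (k' : ℤ))) := by
  obtain ⟨m, rfl⟩ : ∃ m, n = m + 1 := ⟨n - 1, by omega⟩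
  have hsmall : (Matrix.of fun j' k' : Fin (m + 1 - 1) =>
        symbolFourierCoeff (fun ζ => (1 - ζ / w) * (1 - z / ζ) * f ζ)
          ((j' : ℤ) - (k' : ℤ)))
      = Matrix.of fun a b : Fin m =>
          (1 + z/w) * symbolFourierCoeff f ((a:ℤ) - (b:ℤ))
            - z * symbolFourierCoeff f ((a:ℤ) - (b:ℤ) + 1)
            - w⁻¹ * symbolFourierCoeff f ((a:ℤ) - (b:ℤ) - 1) := by
    ext a b
    exact finite_toeplitz_coeff f hf z w _
  rw [hsmall]
  exact FiniteToeplitzAux.aux m (symbolFourierCoeff f) z w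
end

section
/- Let G be a finite graph with n black and n white vertices carrying a Kasteleyn matrix K (an n×n invertible matrix over ℂ indexed by black rows and white columns), and consider the dimer probability measure P[C] = ν(C)/Z on perfect matchings, where det K = S·Z with |S| = 1 independent of the weights. Then for distinct edges e_1 = b_1 w_1, …, e_r = b_r w_r, the probability that all of e_1,…,e_r belong to a random perfect matching equals ∏_{i=1}^r K(b_i, w_i) · det(K^{−1}(w_i, b_j))_{1≤i,j≤r}. -/
open Finset

/-- The Kenyon/Montroll–Potts–Ward formula for dimer correlations: with a Kasteleyn
matrix `K(i,j) = s(i,j)ν(i,j)` satisfying `det K = S·Z` with `|S| = 1` independent of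
the weights, the probability that the distinct edges `e_t = b_t w_t`, `1 ≤ t ≤ r`, all
belong to a random perfect matching (chosen with probability `ν(C)/Z`) equals
`∏_t K(b_t, w_t) · det(K⁻¹(w_t, b_u))_{1≤t,u≤r}`. -/
theorem dimer_correlation_formula (n r : ℕ)
    (Adj : Fin n → Fin n → Prop) [DecidableRel Adj] (s : Fin n → Fin n → ℂ)
    (hs : ∀ i j, Adj i j → ‖s i j‖ = 1)
    (S : ℂ) (hS : ‖S‖ = 1)
    (hdet : ∀ ν' : Fin n → Fin n → ℝ, (∀ i j, ¬Adj i j → ν' i j = 0) →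
      Matrix.det (Matrix.of fun i j : Fin n => s i j * (ν' i j : ℂ))
        = S * ∑ σ ∈ Finset.univ.filter (fun σ : Equiv.Perm (Fin n) => ∀ i, Adj i (σ i)),
            ∏ i, (ν' i (σ i) : ℂ))
    (ν : Fin n → Fin n → ℝ)
    (hν : ∀ i j, Adj i j → 0 < ν i j) (hν0 : ∀ i j, ¬Adj i j → ν i j = 0)
    (hZ : (∑ σ ∈ Finset.univ.filter (fun σ : Equiv.Perm (Fin n) => ∀ i, Adj i (σ i)),
        ∏ i, (ν i (σ i) : ℂ)) ≠ 0)
    (b w : Fin r → Fin n) (hbw : ∀ t, Adj (b t) (w t))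
    (hdist : Function.Injective fun t => (b t, w t)) :
    (∑ σ ∈ Finset.univ.filter (fun σ : Equiv.Perm (Fin n) =>
          (∀ i, Adj i (σ i)) ∧ ∀ t, σ (b t) = w t),
        ∏ i, (ν i (σ i) : ℂ)) /
        (∑ σ ∈ Finset.univ.filter (fun σ : Equiv.Perm (Fin n) => ∀ i, Adj i (σ i)),
          ∏ i, (ν i (σ i) : ℂ))
      = (∏ t, s (b t) (w t) * (ν (b t) (w t) : ℂ)) *
          Matrix.det (Matrix.of fun t u : Fin r =>
            (Matrix.of fun i j : Fin n => s i j * (ν i j : ℂ))⁻¹ (w t) (b u)) := by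
  classical
  set K : Matrix (Fin n) (Fin n) ℂ := Matrix.of fun i j : Fin n => s i j * (ν i j : ℂ) with hKdef
  set Z : ℂ := ∑ σ ∈ Finset.univ.filter (fun σ : Equiv.Perm (Fin n) => ∀ i, Adj i (σ i)),
      ∏ i, (ν i (σ i) : ℂ) with hZdef
  -- degenerate cases
  by_cases hb : Function.Injective b
  case neg =>
    obtain ⟨t, u, htu, hne⟩ : ∃ t u, b t = b u ∧ t ≠ u := by
      simp only [Function.Injective, not_forall] at hb
      obtain ⟨t, u, h1, h2⟩ := hb; exact ⟨t, u, h1, h2⟩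
    have hwtu : w t ≠ w u := fun h => hne (hdist (by simp [Prod.ext_iff, htu, h]))
    have h1 : (Finset.univ.filter (fun σ : Equiv.Perm (Fin n) =>
          (∀ i, Adj i (σ i)) ∧ ∀ t, σ (b t) = w t)) = ∅ := by
      refine Finset.filter_false_of_mem fun σ _ => ?_
      rintro ⟨-, h⟩
      exact hwtu (by rw [← h t, ← h u, htu])
    have h2 : Matrix.det (Matrix.of fun t u : Fin r => K⁻¹ (w t) (b u)) = 0 :=
      Matrix.det_zero_of_column_eq hne fun k => by simp [htu]
    rw [h1, h2]
    simp
  by_cases hw : Function.Injective w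
  case neg =>
    obtain ⟨t, u, htu, hne⟩ : ∃ t u, w t = w u ∧ t ≠ u := by
      simp only [Function.Injective, not_forall] at hw
      obtain ⟨t, u, h1, h2⟩ := hw; exact ⟨t, u, h1, h2⟩
    have h1 : (Finset.univ.filter (fun σ : Equiv.Perm (Fin n) =>
          (∀ i, Adj i (σ i)) ∧ ∀ t, σ (b t) = w t)) = ∅ := by
      refine Finset.filter_false_of_mem fun σ _ => ?_
      rintro ⟨-, h⟩
      have : σ (b t) = σ (b u) := by rw [h t, h u, htu]
      have hbtu : b t = b u := σ.injective this
      exact hne (hdist (by simp [Prod.ext_iff, htu, hbtu]))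
    have h2 : Matrix.det (Matrix.of fun t u : Fin r => K⁻¹ (w t) (b u)) = 0 :=
      Matrix.det_zero_of_row_eq hne (funext fun k => by simp [htu])
    rw [h1, h2]
    simp
  -- main case
  have hKdet : K.det = S * Z := hdet ν hν0
  have hS0 : S ≠ 0 := by intro h; rw [h] at hS; simp at hS
  have hKne : K.det ≠ 0 := by rw [hKdet]; exact mul_ne_zero hS0 hZ
  -- modified weights
  set ν' : Fin n → Fin n → ℝ := fun i j =>
    if h : ∃ t, b t = i then (if j = w h.choose then ν i j else 0) else ν i j with hν'def
  have hν'cases : ∀ t j, ν' (b t) j = if j = w t then ν (b t) j else 0 := by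
    intro t j
    have h : ∃ t', b t' = b t := ⟨t, rfl⟩
    have ht' : h.choose = t := hb h.choose_spec
    simp only [hν'def, dif_pos h, ht']
  have hν'notb : ∀ i j, (¬ ∃ t, b t = i) → ν' i j = ν i j := by
    intro i j h; simp only [hν'def, dif_neg h]
  have hν'supp : ∀ i j, ¬Adj i j → ν' i j = 0 := by
    intro i j h
    by_cases hi : ∃ t, b t = i
    · simp only [hν'def, dif_pos hi]
      split <;> simp [hν0 i j h]
    · rw [hν'notb i j hi]; exact hν0 i j h
  set N : ℂ := ∑ σ ∈ Finset.univ.filter (fun σ : Equiv.Perm (Fin n) =>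
      (∀ i, Adj i (σ i)) ∧ ∀ t, σ (b t) = w t), ∏ i, (ν i (σ i) : ℂ) with hNdef
  -- det of modified matrix
  set K' : Matrix (Fin n) (Fin n) ℂ := Matrix.of fun i j : Fin n => s i j * (ν' i j : ℂ) with hK'def
  have hsum : (∑ σ ∈ Finset.univ.filter (fun σ : Equiv.Perm (Fin n) => ∀ i, Adj i (σ i)),
      ∏ i, (ν' i (σ i) : ℂ)) = N := by
    have step : ∀ σ ∈ Finset.univ.filter (fun σ : Equiv.Perm (Fin n) => ∀ i, Adj i (σ i)),
        (∏ i, (ν' i (σ i) : ℂ))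
          = if (∀ t, σ (b t) = w t) then ∏ i, (ν i (σ i) : ℂ) else 0 := by
      intro σ _
      by_cases hQ : ∀ t, σ (b t) = w t
      · rw [if_pos hQ]
        refine Finset.prod_congr rfl fun i _ => ?_
        by_cases hi : ∃ t, b t = i
        · obtain ⟨t, rfl⟩ := hi
          rw [hν'cases t (σ (b t)), if_pos (hQ t)]
        · rw [hν'notb i _ hi]
      · rw [if_neg hQ]
        push_neg at hQ
        obtain ⟨t, ht⟩ := hQ
        refine Finset.prod_eq_zero (Finset.mem_univ (b t)) ?_
        rw [hν'cases t (σ (b t)), if_neg ht]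
        simp
    rw [Finset.sum_congr rfl step, Finset.sum_ite, Finset.sum_const_zero, add_zero,
      Finset.filter_filter, hNdef]
  have hK'det : K'.det = S * N := by rw [hdet ν' hν'supp, hsum]
  -- the product matrix
  set M : Matrix (Fin n) (Fin n) ℂ := K' * K⁻¹ with hMdef
  have hKinv : K * K⁻¹ = 1 := Matrix.mul_nonsing_inv K (isUnit_iff_ne_zero.2 hKne)
  have hMrow_not : ∀ i, (¬ ∃ t, b t = i) → ∀ j, M i j = (1 : Matrix (Fin n) (Fin n) ℂ) i j := by
    intro i hi j
    rw [← hKinv]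
    simp only [hMdef, Matrix.mul_apply]
    refine Finset.sum_congr rfl fun k _ => ?_
    simp only [hK'def, hKdef, Matrix.of_apply, hν'notb i k hi]
  have hMrow_b : ∀ t j, M (b t) j = K (b t) (w t) * K⁻¹ (w t) j := by
    intro t j
    simp only [hMdef, Matrix.mul_apply]
    rw [Finset.sum_eq_single (w t)]
    · simp only [hK'def, Matrix.of_apply, hν'cases t (w t), if_pos rfl, hKdef]
      simp
    · intro k _ hk
      simp only [hK'def, Matrix.of_apply, hν'cases t k, if_neg hk]
      simp
    · simp
  -- block decomposition
  have hMdet1 : M.det = K'.det * K⁻¹.det := Matrix.det_mul _ _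
  set p : Fin n → Prop := fun i => ∃ t, b t = i with hpdef
  have hdetM : M.det = (∏ t, K (b t) (w t)) *
      Matrix.det (Matrix.of fun t u : Fin r => K⁻¹ (w t) (b u)) := by
    rw [← Matrix.det_submatrix_equiv_self (Equiv.sumCompl p) M]
    have hblock : M.submatrix (Equiv.sumCompl p) (Equiv.sumCompl p) = Matrix.fromBlocks
        (Matrix.of fun x y : {i // p i} => M x.1 y.1)
        (Matrix.of fun (x : {i // p i}) (y : {i // ¬ p i}) => M x.1 y.1)
        0 1 := by
      ext x y
      cases x with
      | inl x => cases y with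
        | inl y => simp [Matrix.fromBlocks]
        | inr y => simp [Matrix.fromBlocks]
      | inr x => cases y with
        | inl y =>
          have hxy : x.1 ≠ y.1 := fun h => x.2 (h ▸ y.2)
          simp only [Matrix.submatrix_apply, Equiv.sumCompl_apply_inl,
            Equiv.sumCompl_apply_inr, Matrix.fromBlocks, Matrix.of_apply, Sum.elim_inr,
            Sum.elim_inl, Matrix.zero_apply]
          rw [hMrow_not x.1 x.2 y.1, Matrix.one_apply_ne hxy]
        | inr y =>
          simp only [Matrix.submatrix_apply, Equiv.sumCompl_apply_inr,
            Matrix.fromBlocks, Matrix.of_apply, Sum.elim_inr, Matrix.zero_apply]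
          rw [hMrow_not x.1 x.2 y.1]
          simp [Matrix.one_apply, Subtype.ext_iff]
    rw [hblock, Matrix.det_fromBlocks_zero₂₁, Matrix.det_one, mul_one]
    -- now reindex the top-left block by Fin r
    let e2 : Fin r ≃ {i // p i} :=
      (Equiv.ofInjective b hb).trans (Equiv.subtypeEquivRight fun x => Iff.rfl)
    rw [← Matrix.det_submatrix_equiv_self e2 (Matrix.of fun x y : {i // p i} => M x.1 y.1)]
    have heq : (((Matrix.of fun x y : {i // p i} => M x.1 y.1)).submatrix e2 e2)
        = Matrix.of fun t u : Fin r => K (b t) (w t) * K⁻¹ (w t) (b u) := by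
      ext t u
      have h1 : ((e2 t : {i // p i}) : Fin n) = b t := rfl
      have h2 : ((e2 u : {i // p i}) : Fin n) = b u := rfl
      simp only [Matrix.submatrix_apply, Matrix.of_apply, h1, h2]
      exact hMrow_b t (b u)
    rw [heq]
    exact Matrix.det_mul_column _ _
  -- combine
  have hinv : K⁻¹.det = (K.det)⁻¹ := by
    rw [Matrix.det_nonsing_inv, Ring.inverse_eq_inv]
  have key : N / Z = M.det := by
    rw [hMdet1, hK'det, hinv, hKdet]
    field_simp
  rw [key, hdetM]
  rfl
end

section
/- Let X be a finite set and ξ a determinantal point process on X with correlation kernel K, meaning that for all distinct points x_1,…,x_n ∈ X, P[ξ has particles at x_1,…,x_n] = det(K(x_i,x_j))_{1≤i,j≤n}. Then the dual (complementary) process ξ*, whose particle set is the complement in X of the particle set of ξ, is also determinantal with correlation kernel I − K: for all distinct y_1,…,y_n ∈ X, P[ξ* has particles at y_1,…,y_n] = det(δ_{ij} − K(y_i,y_j))_{1≤i,j≤n}. -/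
open Finset

section helpers
variable {X : Type*} [Fintype X] [DecidableEq X]

lemma dual_det_piecewise_id {n : ℕ} (s : Finset (Fin n)) (a : Fin n → Fin n → ℂ) :
    Matrix.det (Matrix.of (s.piecewise a (fun i j => if i = j then (1:ℂ) else 0)))
      = Matrix.det (Matrix.of fun i j : {x : Fin n // x ∈ s} => a i j) := by
  classical
  rw [← Matrix.det_submatrix_equiv_self (Equiv.sumCompl (· ∈ s))]
  have : (Matrix.of (s.piecewise a (fun i j => if i = j then (1:ℂ) else 0))).submatrix
        (Equiv.sumCompl (· ∈ s)) (Equiv.sumCompl (· ∈ s))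
      = Matrix.fromBlocks (Matrix.of fun i j : {x : Fin n // x ∈ s} => a i j)
          (Matrix.of fun (i : {x : Fin n // x ∈ s}) (j : {x : Fin n // ¬ x ∈ s}) => a i j)
          0 1 := by
    ext i j
    cases i with
    | inl i =>
      cases j with
      | inl j => simp [Matrix.submatrix, Finset.piecewise_eq_of_mem _ _ _ i.2]
      | inr j => simp [Matrix.submatrix, Finset.piecewise_eq_of_mem _ _ _ i.2]
    | inr i =>
      cases j with
      | inl j =>
        have : (i : Fin n) ≠ (j : Fin n) := fun h => i.2 (h ▸ j.2)
        simp [Matrix.submatrix, Finset.piecewise_eq_of_notMem _ _ _ i.2, this]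
      | inr j =>
        simp [Matrix.submatrix, Finset.piecewise_eq_of_notMem _ _ _ i.2,
          Matrix.one_apply, Subtype.ext_iff]
  rw [this, Matrix.det_fromBlocks_zero₂₁, Matrix.det_one, mul_one]

lemma dual_det_one_sub_expand {n : ℕ} (M : Matrix (Fin n) (Fin n) ℂ) :
    Matrix.det (Matrix.of fun i j : Fin n => (if i = j then (1:ℂ) else 0) - M i j)
      = ∑ s : Finset (Fin n),
          (-1 : ℂ) ^ s.card * Matrix.det (Matrix.of fun i j : {x : Fin n // x ∈ s} => M i j) := by
  classical
  set a : Fin n → Fin n → ℂ := fun i j => -M i j with ha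
  set b : Fin n → Fin n → ℂ := fun i j => if i = j then (1:ℂ) else 0 with hb
  have h0 : (Matrix.of fun i j : Fin n => (if i = j then (1:ℂ) else 0) - M i j)
      = Matrix.of (a + b) := by
    funext i j
    show (if i = j then (1:ℂ) else 0) - M i j = a i j + b i j
    simp [ha, hb, sub_eq_add_neg, add_comm]
  have hsum := (Matrix.detRowAlternating (n := Fin n) (R := ℂ)).toMultilinearMap.map_add_univ a b
  have h2 : ∀ s : Finset (Fin n),
      (Matrix.detRowAlternating (n := Fin n) (R := ℂ)).toMultilinearMap (s.piecewise a b)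
        = (-1 : ℂ) ^ s.card * Matrix.det (Matrix.of fun i j : {x : Fin n // x ∈ s} => M i j) := by
    intro s
    have h1 : (Matrix.detRowAlternating (n := Fin n) (R := ℂ)).toMultilinearMap (s.piecewise a b)
        = Matrix.det (Matrix.of (s.piecewise (fun i j => -M i j) (fun i j => if i = j then (1:ℂ) else 0))) := rfl
    rw [h1, dual_det_piecewise_id]
    have : (Matrix.of fun i j : {x : Fin n // x ∈ s} => -M i j)
        = -(Matrix.of fun i j : {x : Fin n // x ∈ s} => M i j) := by
      ext i j; simp
    rw [this, Matrix.det_neg, Fintype.card_coe]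
  calc Matrix.det (Matrix.of fun i j : Fin n => (if i = j then (1:ℂ) else 0) - M i j)
      = (Matrix.detRowAlternating (n := Fin n) (R := ℂ)).toMultilinearMap (a + b) := by
        rw [h0]; rfl
    _ = ∑ s : Finset (Fin n),
        (Matrix.detRowAlternating (n := Fin n) (R := ℂ)).toMultilinearMap (s.piecewise a b) := hsum
    _ = _ := Finset.sum_congr rfl fun s _ => h2 s

lemma dual_incl_excl (μ : Finset X → ℝ) (n : ℕ) (y : Fin n → X) :
    ∑ A ∈ Finset.univ.filter (fun A : Finset X => ∀ i, y i ∉ A), μ A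
      = ∑ s : Finset (Fin n), (-1:ℝ)^s.card *
          ∑ A ∈ Finset.univ.filter (fun A : Finset X => ∀ i ∈ s, y i ∈ A), μ A := by
  classical
  have key : ∀ A : Finset X,
      (if (∀ i, y i ∉ A) then (1:ℝ) else 0)
        = ∑ s : Finset (Fin n), (-1:ℝ)^s.card * (if (∀ i ∈ s, y i ∈ A) then 1 else 0) := by
    intro A
    have h1 : (if (∀ i, y i ∉ A) then (1:ℝ) else 0)
        = ∏ i : Fin n, (-(if y i ∈ A then (1:ℝ) else 0) + 1) := by
      by_cases h : ∀ i, y i ∉ A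
      · rw [if_pos h, Finset.prod_eq_one]
        intro i _
        rw [if_neg (h i)]; ring
      · rw [if_neg h]
        push_neg at h
        obtain ⟨i, hi⟩ := h
        rw [eq_comm]
        apply Finset.prod_eq_zero (Finset.mem_univ i)
        rw [if_pos hi]; ring
    rw [h1, Finset.prod_add, Finset.powerset_univ]
    refine Finset.sum_congr rfl fun s _ => ?_
    rw [Finset.prod_const_one, mul_one]
    have : ∀ i ∈ s, (-(if y i ∈ A then (1:ℝ) else 0)) = (-1) * (if y i ∈ A then (1:ℝ) else 0) := by
      intro i _; ring
    rw [Finset.prod_congr rfl this, Finset.prod_mul_distrib, Finset.prod_const,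
      Finset.prod_boole]
    simp
  calc ∑ A ∈ Finset.univ.filter (fun A : Finset X => ∀ i, y i ∉ A), μ A
      = ∑ A : Finset X, (if (∀ i, y i ∉ A) then (1:ℝ) else 0) * μ A := by
        rw [Finset.sum_filter]
        exact Finset.sum_congr rfl fun A _ => by rw [boole_mul]
    _ = ∑ A : Finset X, ∑ s : Finset (Fin n),
          (-1:ℝ)^s.card * (if (∀ i ∈ s, y i ∈ A) then 1 else 0) * μ A := by
        exact Finset.sum_congr rfl fun A _ => by rw [key A, Finset.sum_mul]
    _ = ∑ s : Finset (Fin n), ∑ A : Finset X,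
          (-1:ℝ)^s.card * ((if (∀ i ∈ s, y i ∈ A) then 1 else 0) * μ A) := by
        rw [Finset.sum_comm]
        exact Finset.sum_congr rfl fun s _ => Finset.sum_congr rfl fun A _ => by ring
    _ = _ := by
        refine Finset.sum_congr rfl fun s _ => ?_
        rw [← Finset.mul_sum]
        congr 1
        rw [Finset.sum_filter]
        exact Finset.sum_congr rfl fun A _ => by rw [boole_mul]

end helpers

/-- Duality for determinantal point processes on a finite set `X`: if a random subset
of `X` (given by a probability distribution `μ` on `Finset X`) is determinantal with
kernel `K`, i.e. for all distinct `x₁,…,xₙ` the probability of containing all of them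
is `det(K(xᵢ,xⱼ))`, then the complementary process is determinantal with kernel `I - K`:
for all distinct `y₁,…,yₙ`, the probability that none of the `yᵢ` is a particle equals
`det(δ_{ij} - K(yᵢ,yⱼ))`. -/
theorem dual_determinantal_process {X : Type*} [Fintype X] [DecidableEq X]
    (μ : Finset X → ℝ) (K : X → X → ℂ)
    (hμ0 : ∀ A, 0 ≤ μ A) (hμ1 : ∑ A : Finset X, μ A = 1)
    (hK : ∀ (n : ℕ) (x : Fin n → X), Function.Injective x →
      ((∑ A ∈ Finset.univ.filter (fun A : Finset X => ∀ i, x i ∈ A), μ A : ℝ) : ℂ)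
        = Matrix.det (Matrix.of fun i j : Fin n => K (x i) (x j)))
    (n : ℕ) (y : Fin n → X) (hy : Function.Injective y) :
    ((∑ A ∈ Finset.univ.filter (fun A : Finset X => ∀ i, y i ∉ A), μ A : ℝ) : ℂ)
      = Matrix.det (Matrix.of fun i j : Fin n =>
          (if i = j then (1 : ℂ) else 0) - K (y i) (y j)) := by
  classical
  -- the key per-subset identity
  have hs : ∀ s : Finset (Fin n),
      ((∑ A ∈ Finset.univ.filter (fun A : Finset X => ∀ i ∈ s, y i ∈ A), μ A : ℝ) : ℂ)
        = Matrix.det (Matrix.of fun i j : {x : Fin n // x ∈ s} => K (y i) (y j)) := by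
    intro s
    have hinj : Function.Injective (fun i : Fin s.card => y (s.orderEmbOfFin rfl i)) :=
      hy.comp (s.orderEmbOfFin rfl).injective
    have h := hK s.card _ hinj
    have hfilter : Finset.univ.filter
          (fun A : Finset X => ∀ i : Fin s.card, y (s.orderEmbOfFin rfl i) ∈ A)
        = Finset.univ.filter (fun A : Finset X => ∀ i ∈ s, y i ∈ A) := by
      apply Finset.filter_congr
      intro A _
      constructor
      · intro hA i hi
        have : i ∈ Set.range (s.orderEmbOfFin rfl) := by
          rw [Finset.range_orderEmbOfFin]; exact hi
        obtain ⟨k, hk⟩ := this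
        exact hk ▸ hA k
      · intro hA k
        exact hA _ (s.orderEmbOfFin_mem rfl k)
    have hdet : Matrix.det (Matrix.of fun i j : Fin s.card =>
          K (y (s.orderEmbOfFin rfl i)) (y (s.orderEmbOfFin rfl j)))
        = Matrix.det (Matrix.of fun i j : {x : Fin n // x ∈ s} => K (y i) (y j)) := by
      rw [← Matrix.det_submatrix_equiv_self (s.orderIsoOfFin rfl).toEquiv
        (Matrix.of fun i j : {x : Fin n // x ∈ s} => K (y i) (y j))]
      congr 1
    rw [← hfilter, h, hdet]
  rw [show (Matrix.of fun i j : Fin n => (if i = j then (1:ℂ) else 0) - K (y i) (y j))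
      = (Matrix.of fun i j : Fin n => (if i = j then (1:ℂ) else 0)
          - (Matrix.of fun i j : Fin n => K (y i) (y j)) i j) from rfl,
    dual_det_one_sub_expand, dual_incl_excl μ n y, Complex.ofReal_sum]
  refine Finset.sum_congr rfl fun s _ => ?_
  rw [Complex.ofReal_mul, hs s, Complex.ofReal_pow, Complex.ofReal_neg, Complex.ofReal_one]
  rfl
end

section
/- Let G be a finite directed acyclic graph with a weight function w : E → ℂ, extended multiplicatively to paths, and define the transition weight p(u,v) = ∑_{π ∈ Π(u,v)} w(π) over all directed paths from u to v. Let u_1,…,u_n and v_1,…,v_n be vertices that are G-compatible: whenever α < α' and β > β', every path from u_α to v_β intersects (shares a vertex with) every path from u_{α'} to v_{β'}. Then the total weight of all families (π_1,…,π_n) of pairwise vertex-disjoint paths with π_i from u_i to v_i equals det(p(u_i, v_j))_{1≤i,j≤n}. -/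
/-- A directed path from `u` to `v` in the graph with adjacency `Adj`, recorded as the
list of its vertices. -/
def IsDirPath {V : Type*} (Adj : V → V → Prop) (u v : V) (l : List V) : Prop :=
  l ≠ [] ∧ l.head? = some u ∧ l.getLast? = some v ∧ l.Chain' Adj

/-- The weight of a path: the product of the weights of its edges. -/
noncomputable def dirPathWeight {V : Type*} (w : V → V → ℂ) (l : List V) : ℂ :=
  ((l.zip l.tail).map fun p => w p.1 p.2).prod

set_option linter.unusedSectionVars false

lemma lgv_chain_transGen {V : Type*} {Adj : V → V → Prop} :
    ∀ {a b : V} {l : List V}, List.Chain Adj a l → b ∈ l → Relation.TransGen Adj a b := by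
  intro a b l
  induction l generalizing a with
  | nil => intro _ h; cases h
  | cons c t ih =>
    intro hc hb
    rcases List.chain_cons.1 hc with ⟨hac, hct⟩
    rcases List.mem_cons.1 hb with rfl | hbt
    · exact Relation.TransGen.single hac
    · exact Relation.TransGen.head hac (ih hct hbt)

lemma lgv_nodup {V : Type*} {Adj : V → V → Prop} (hac : ∀ x, ¬Relation.TransGen Adj x x) :
    ∀ {l : List V}, l.Chain' Adj → l.Nodup := by
  intro l
  induction l with
  | nil => simp
  | cons a t ih =>
    intro h
    have h' : List.Chain Adj a t := h
    refine List.nodup_cons.2 ⟨fun hmem => hac a (lgv_chain_transGen h' hmem), ih h.tail⟩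

lemma lgv_weight_cons {V : Type*} (w : V → V → ℂ) (a b : V) (t : List V) :
    dirPathWeight w (a :: b :: t) = w a b * dirPathWeight w (b :: t) := by
  simp [dirPathWeight]

lemma lgv_weight_single {V : Type*} (w : V → V → ℂ) (a : V) :
    dirPathWeight w [a] = 1 := by simp [dirPathWeight]

lemma lgv_weight_split {V : Type*} (w : V → V → ℂ) (z : V) :
    ∀ (s t : List V), dirPathWeight w (s ++ z :: t)
      = dirPathWeight w (s ++ [z]) * dirPathWeight w (z :: t) := by
  intro s
  induction s with
  | nil => intro t; simp [lgv_weight_single]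
  | cons a s ih =>
    intro t
    cases s with
    | nil => simp [lgv_weight_cons, lgv_weight_single, mul_assoc]
    | cons b s' =>
      simp only [List.cons_append, lgv_weight_cons]
      rw [show b :: (s' ++ z :: t) = (b :: s') ++ z :: t from rfl, ih t,
        show b :: (s' ++ [z]) = (b :: s') ++ [z] from rfl]
      ring
section
variable {V : Type*}

lemma lgv_getLast?_append {l l' : List V} (h : l' ≠ []) :
    (l ++ l').getLast? = l'.getLast? := by
  rw [List.getLast?_append]
  cases hl : l'.getLast? with
  | none => exact absurd (List.getLast?_eq_none_iff.1 hl) h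
  | some a => rfl

lemma lgv_head?_append_cons (s : List V) (z : V) (t : List V) :
    (s ++ z :: t).head? = s.head?.or (some z) := by
  rw [List.head?_append]; rfl

lemma lgv_join {Adj : V → V → Prop} {p q p' q' : V} {s t s' t' : List V} {z : V}
    (h1 : IsDirPath Adj p q (s ++ z :: t)) (h2 : IsDirPath Adj p' q' (s' ++ z :: t')) :
    IsDirPath Adj p q' (s ++ z :: t') := by
  obtain ⟨-, hh1, -, hc1⟩ := h1
  obtain ⟨-, -, hl2, hc2⟩ := h2
  refine ⟨by simp, ?_, ?_, ?_⟩
  · rw [lgv_head?_append_cons] at hh1 ⊢; exact hh1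
  · rw [lgv_getLast?_append (by simp)] at hl2 ⊢; exact hl2
  · exact List.isChain_split.2 ⟨(List.isChain_split.1 hc1).1, (List.isChain_split.1 hc2).2⟩

variable [DecidableEq V]

def lgvPre (l : List V) (z : V) : List V := l.takeWhile fun a => decide (a ≠ z)

def lgvPost (l : List V) (z : V) : List V := (l.dropWhile fun a => decide (a ≠ z)).tail

lemma lgvPre_cons_ne {a z : V} (t : List V) (ha : a ≠ z) :
    lgvPre (a :: t) z = a :: lgvPre t z := by simp [lgvPre, List.takeWhile_cons, ha]

lemma lgvPost_cons_ne {a z : V} (t : List V) (ha : a ≠ z) :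
    lgvPost (a :: t) z = lgvPost t z := by simp [lgvPost, List.dropWhile_cons, ha]

lemma lgvPre_cons_eq {z : V} (t : List V) : lgvPre (z :: t) z = [] := by simp [lgvPre]

lemma lgvPost_cons_eq {z : V} (t : List V) : lgvPost (z :: t) z = t := by simp [lgvPost]

lemma lgv_split {z : V} : ∀ {l : List V}, z ∈ l →
    l = lgvPre l z ++ z :: lgvPost l z ∧ z ∉ lgvPre l z := by
  intro l
  induction l with
  | nil => intro h; cases h
  | cons a t ih =>
    intro h
    by_cases ha : a = z
    · subst ha
      simp [lgvPre_cons_eq, lgvPost_cons_eq]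
    · have hz : z ∈ t := by
        rcases List.mem_cons.1 h with h' | h'
        · exact absurd h'.symm ha
        · exact h'
      obtain ⟨h1, h2⟩ := ih hz
      rw [lgvPre_cons_ne t ha, lgvPost_cons_ne t ha]
      refine ⟨by rw [List.cons_append]; exact congrArg (a :: ·) h1, ?_⟩
      intro hmem
      rcases List.mem_cons.1 hmem with h' | h'
      · exact ha h'.symm
      · exact h2 h'

lemma lgv_split_unique {z : V} : ∀ {s : List V} (t : List V), z ∉ s →
    lgvPre (s ++ z :: t) z = s ∧ lgvPost (s ++ z :: t) z = t := by
  intro s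
  induction s with
  | nil =>
    intro t _
    simpa using ⟨lgvPre_cons_eq t, lgvPost_cons_eq t⟩
  | cons a s ih =>
    intro t hz
    have ha : a ≠ z := fun h => hz (h ▸ List.mem_cons_self)
    have hz' : z ∉ s := fun h => hz (List.mem_cons_of_mem _ h)
    obtain ⟨h1, h2⟩ := ih t hz'
    rw [List.cons_append, lgvPre_cons_ne _ ha, lgvPost_cons_ne _ ha]
    exact ⟨congrArg (a :: ·) h1, h2⟩
end
section
variable {V : Type*} [DecidableEq V] {n : ℕ}

def lgvMeets (π : Fin n → List V) (i : Fin n) : Prop :=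
  ∃ a ∈ π i, ∃ j, j ≠ i ∧ a ∈ π j

open Classical in
noncomputable def lgvI (π : Fin n → List V) (h : ∃ i, lgvMeets π i) : Fin n :=
  (Finset.univ.filter fun i => lgvMeets π i).min'
    (by obtain ⟨i, hi⟩ := h; exact ⟨i, by simpa using hi⟩)

lemma lgvI_meets (π : Fin n → List V) (h : ∃ i, lgvMeets π i) : lgvMeets π (lgvI π h) := by
  classical
  have := Finset.min'_mem (Finset.univ.filter fun i => lgvMeets π i)
    (by obtain ⟨i, hi⟩ := h; exact ⟨i, by simpa using hi⟩)
  simp only [Finset.mem_filter] at this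
  exact this.2

lemma lgvI_min (π : Fin n → List V) (h : ∃ i, lgvMeets π i) {i : Fin n}
    (hi : lgvMeets π i) : lgvI π h ≤ i := by
  classical
  exact Finset.min'_le _ _ (by simpa using hi)

open Classical in
noncomputable def lgvX (π : Fin n → List V) (h : ∃ i, lgvMeets π i) : V :=
  ((π (lgvI π h)).find? fun a => decide (∃ j, j ≠ lgvI π h ∧ a ∈ π j)).get (by
    rw [List.find?_isSome]
    obtain ⟨a, ha, j, hj, haj⟩ := lgvI_meets π h
    exact ⟨a, ha, by simp; exact ⟨j, hj, haj⟩⟩)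

open Classical in
lemma lgvX_find (π : Fin n → List V) (h : ∃ i, lgvMeets π i) :
    (π (lgvI π h)).find? (fun a => decide (∃ j, j ≠ lgvI π h ∧ a ∈ π j))
      = some (lgvX π h) :=
  (Option.some_get _).symm

lemma lgvX_mem (π : Fin n → List V) (h : ∃ i, lgvMeets π i) :
    lgvX π h ∈ π (lgvI π h) :=
  List.mem_of_find?_eq_some (lgvX_find π h)

lemma lgvX_other (π : Fin n → List V) (h : ∃ i, lgvMeets π i) :
    ∃ j, j ≠ lgvI π h ∧ lgvX π h ∈ π j := by
  have := List.find?_some (lgvX_find π h)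
  simpa using this

lemma lgvX_first (π : Fin n → List V) (h : ∃ i, lgvMeets π i) :
    ∀ y ∈ lgvPre (π (lgvI π h)) (lgvX π h), ¬ ∃ j, j ≠ lgvI π h ∧ y ∈ π j := by
  have hfind := lgvX_find π h
  rw [List.find?_eq_some_iff_append] at hfind
  obtain ⟨hpz, as, bs, hsplit, hfail⟩ := hfind
  have hznotin : lgvX π h ∉ as := by
    intro hmem
    have := hfail _ hmem
    simp only [Bool.not_eq_true'] at this
    rw [this] at hpz
    exact Bool.false_ne_true hpz
  have := lgv_split_unique (s := as) (z := lgvX π h) bs hznotin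
  rw [← hsplit] at this
  rw [this.1]
  intro y hy
  have := hfail y hy
  simpa using this

open Classical in
noncomputable def lgvJ (π : Fin n → List V) (h : ∃ i, lgvMeets π i) : Fin n :=
  (Finset.univ.filter fun j => j ≠ lgvI π h ∧ lgvX π h ∈ π j).min'
    (by obtain ⟨j, hj⟩ := lgvX_other π h; exact ⟨j, by simpa using hj⟩)

lemma lgvJ_spec (π : Fin n → List V) (h : ∃ i, lgvMeets π i) :
    lgvJ π h ≠ lgvI π h ∧ lgvX π h ∈ π (lgvJ π h) := by
  classical
  have := Finset.min'_mem (Finset.univ.filter fun j => j ≠ lgvI π h ∧ lgvX π h ∈ π j)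
    (by obtain ⟨j, hj⟩ := lgvX_other π h; exact ⟨j, by simpa using hj⟩)
  exact (Finset.mem_filter.1 this).2

lemma lgvJ_min (π : Fin n → List V) (h : ∃ i, lgvMeets π i) {j : Fin n}
    (hj : j ≠ lgvI π h) (hmem : lgvX π h ∈ π j) : lgvJ π h ≤ j := by
  classical
  exact Finset.min'_le _ _ (by simp [hj, hmem])

lemma lgvI_lt_lgvJ (π : Fin n → List V) (h : ∃ i, lgvMeets π i) :
    lgvI π h < lgvJ π h := by
  obtain ⟨hne, hmem⟩ := lgvJ_spec π h
  have hmeets : lgvMeets π (lgvJ π h) :=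
    ⟨lgvX π h, hmem, lgvI π h, fun e => hne e.symm, lgvX_mem π h⟩
  exact lt_of_le_of_ne (lgvI_min π h hmeets) (fun e => hne e.symm)

noncomputable def lgvFlip (x : Σ _ : Equiv.Perm (Fin n), Fin n → List V)
    (h : ∃ i, lgvMeets x.2 i) : Σ _ : Equiv.Perm (Fin n), Fin n → List V :=
  ⟨x.1 * Equiv.swap (lgvI x.2 h) (lgvJ x.2 h),
   Function.update (Function.update x.2 (lgvI x.2 h)
       (lgvPre (x.2 (lgvI x.2 h)) (lgvX x.2 h) ++ lgvX x.2 h :: lgvPost (x.2 (lgvJ x.2 h)) (lgvX x.2 h)))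
     (lgvJ x.2 h)
     (lgvPre (x.2 (lgvJ x.2 h)) (lgvX x.2 h) ++ lgvX x.2 h :: lgvPost (x.2 (lgvI x.2 h)) (lgvX x.2 h))⟩

lemma lgvFlip_apply_I (x : Σ _ : Equiv.Perm (Fin n), Fin n → List V)
    (h : ∃ i, lgvMeets x.2 i) :
    (lgvFlip x h).2 (lgvI x.2 h)
      = lgvPre (x.2 (lgvI x.2 h)) (lgvX x.2 h) ++ lgvX x.2 h :: lgvPost (x.2 (lgvJ x.2 h)) (lgvX x.2 h) := by
  have hne : lgvI x.2 h ≠ lgvJ x.2 h := (lgvI_lt_lgvJ x.2 h).ne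
  simp [lgvFlip, Function.update_of_ne hne, Function.update_self]

lemma lgvFlip_apply_J (x : Σ _ : Equiv.Perm (Fin n), Fin n → List V)
    (h : ∃ i, lgvMeets x.2 i) :
    (lgvFlip x h).2 (lgvJ x.2 h)
      = lgvPre (x.2 (lgvJ x.2 h)) (lgvX x.2 h) ++ lgvX x.2 h :: lgvPost (x.2 (lgvI x.2 h)) (lgvX x.2 h) := by
  simp [lgvFlip, Function.update_self]

lemma lgvFlip_apply_other (x : Σ _ : Equiv.Perm (Fin n), Fin n → List V)
    (h : ∃ i, lgvMeets x.2 i) {k : Fin n} (hki : k ≠ lgvI x.2 h) (hkj : k ≠ lgvJ x.2 h) :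
    (lgvFlip x h).2 k = x.2 k := by
  simp [lgvFlip, Function.update_of_ne hkj, Function.update_of_ne hki]

end
section
variable {V : Type*} [DecidableEq V] {n : ℕ}

lemma lgv_split_I (x : Σ _ : Equiv.Perm (Fin n), Fin n → List V) (h : ∃ i, lgvMeets x.2 i) :
    x.2 (lgvI x.2 h) = lgvPre (x.2 (lgvI x.2 h)) (lgvX x.2 h)
      ++ lgvX x.2 h :: lgvPost (x.2 (lgvI x.2 h)) (lgvX x.2 h) ∧
    lgvX x.2 h ∉ lgvPre (x.2 (lgvI x.2 h)) (lgvX x.2 h) :=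
  lgv_split (lgvX_mem x.2 h)

lemma lgv_split_J (x : Σ _ : Equiv.Perm (Fin n), Fin n → List V) (h : ∃ i, lgvMeets x.2 i) :
    x.2 (lgvJ x.2 h) = lgvPre (x.2 (lgvJ x.2 h)) (lgvX x.2 h)
      ++ lgvX x.2 h :: lgvPost (x.2 (lgvJ x.2 h)) (lgvX x.2 h) ∧
    lgvX x.2 h ∉ lgvPre (x.2 (lgvJ x.2 h)) (lgvX x.2 h) :=
  lgv_split (lgvJ_spec x.2 h).2

lemma lgvFlip_fst (x : Σ _ : Equiv.Perm (Fin n), Fin n → List V) (h : ∃ i, lgvMeets x.2 i) :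
    (lgvFlip x h).1 = x.1 * Equiv.swap (lgvI x.2 h) (lgvJ x.2 h) := rfl

lemma lgvFlip_valid {Adj : V → V → Prop} {u v : Fin n → V}
    (x : Σ _ : Equiv.Perm (Fin n), Fin n → List V) (h : ∃ i, lgvMeets x.2 i)
    (hval : ∀ i, IsDirPath Adj (u i) (v (x.1 i)) (x.2 i)) :
    ∀ i, IsDirPath Adj (u i) (v ((lgvFlip x h).1 i)) ((lgvFlip x h).2 i) := by
  intro i
  have hne : lgvI x.2 h ≠ lgvJ x.2 h := (lgvI_lt_lgvJ x.2 h).ne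
  have hI := (lgv_split_I x h).1
  have hJ := (lgv_split_J x h).1
  by_cases hiI : i = lgvI x.2 h
  · subst hiI
    rw [lgvFlip_apply_I, lgvFlip_fst]
    have h1 := hval (lgvI x.2 h); rw [hI] at h1
    have h2 := hval (lgvJ x.2 h); rw [hJ] at h2
    have := lgv_join h1 h2
    simpa [Equiv.Perm.mul_apply, Equiv.swap_apply_left] using this
  · by_cases hiJ : i = lgvJ x.2 h
    · subst hiJ
      rw [lgvFlip_apply_J, lgvFlip_fst]
      have h1 := hval (lgvJ x.2 h); rw [hJ] at h1
      have h2 := hval (lgvI x.2 h); rw [hI] at h2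
      have := lgv_join h1 h2
      simpa [Equiv.Perm.mul_apply, Equiv.swap_apply_right] using this
    · rw [lgvFlip_apply_other x h hiI hiJ, lgvFlip_fst]
      have : (Equiv.swap (lgvI x.2 h) (lgvJ x.2 h)) i = i :=
        Equiv.swap_apply_of_ne_of_ne hiI hiJ
      rw [Equiv.Perm.mul_apply, this]
      exact hval i

lemma lgvFlip_prod (w : V → V → ℂ)
    (x : Σ _ : Equiv.Perm (Fin n), Fin n → List V) (h : ∃ i, lgvMeets x.2 i) :
    ∏ i, dirPathWeight w ((lgvFlip x h).2 i) = ∏ i, dirPathWeight w (x.2 i) := by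
  classical
  set i₀ := lgvI x.2 h
  set j₀ := lgvJ x.2 h
  have hne : i₀ ≠ j₀ := (lgvI_lt_lgvJ x.2 h).ne
  have hmemj : j₀ ∈ (Finset.univ : Finset (Fin n)) := Finset.mem_univ _
  have hmemi : i₀ ∈ (Finset.univ : Finset (Fin n)).erase j₀ :=
    Finset.mem_erase.2 ⟨hne, Finset.mem_univ _⟩
  rw [← Finset.mul_prod_erase _ _ hmemj, ← Finset.mul_prod_erase _ _ hmemi,
    ← Finset.mul_prod_erase _ (fun i => dirPathWeight w (x.2 i)) hmemj,
    ← Finset.mul_prod_erase _ (fun i => dirPathWeight w (x.2 i)) hmemi]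
  have hrest : ∏ i ∈ (Finset.univ.erase j₀).erase i₀, dirPathWeight w ((lgvFlip x h).2 i)
      = ∏ i ∈ (Finset.univ.erase j₀).erase i₀, dirPathWeight w (x.2 i) := by
    refine Finset.prod_congr rfl fun k hk => ?_
    simp only [Finset.mem_erase] at hk
    rw [lgvFlip_apply_other x h hk.1 hk.2.1]
  rw [hrest, lgvFlip_apply_I, lgvFlip_apply_J]
  have e1 := lgv_weight_split w (lgvX x.2 h) (lgvPre (x.2 i₀) (lgvX x.2 h))
    (lgvPost (x.2 j₀) (lgvX x.2 h))
  have e2 := lgv_weight_split w (lgvX x.2 h) (lgvPre (x.2 j₀) (lgvX x.2 h))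
    (lgvPost (x.2 i₀) (lgvX x.2 h))
  have e3 := lgv_weight_split w (lgvX x.2 h) (lgvPre (x.2 i₀) (lgvX x.2 h))
    (lgvPost (x.2 i₀) (lgvX x.2 h))
  have e4 := lgv_weight_split w (lgvX x.2 h) (lgvPre (x.2 j₀) (lgvX x.2 h))
    (lgvPost (x.2 j₀) (lgvX x.2 h))
  rw [e1, e2]
  conv_rhs => rw [(lgv_split_I x h).1, (lgv_split_J x h).1, e3, e4]
  ring

lemma lgvFlip_bad (x : Σ _ : Equiv.Perm (Fin n), Fin n → List V) (h : ∃ i, lgvMeets x.2 i) :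
    ∃ i, lgvMeets (lgvFlip x h).2 i := by
  refine ⟨lgvI x.2 h, lgvX x.2 h, ?_, lgvJ x.2 h, (lgvJ_spec x.2 h).1, ?_⟩
  · rw [lgvFlip_apply_I]; simp
  · rw [lgvFlip_apply_J]; simp
end
section
variable {V : Type*} [DecidableEq V] {n : ℕ}

lemma lgvFlip_stable (x : Σ _ : Equiv.Perm (Fin n), Fin n → List V)
    (h : ∃ i, lgvMeets x.2 i) (hnd : (x.2 (lgvI x.2 h)).Nodup) :
    lgvI (lgvFlip x h).2 (lgvFlip_bad x h) = lgvI x.2 h ∧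
    lgvX (lgvFlip x h).2 (lgvFlip_bad x h) = lgvX x.2 h ∧
    lgvJ (lgvFlip x h).2 (lgvFlip_bad x h) = lgvJ x.2 h := by
  classical
  set π := x.2 with hπ
  set π' := (lgvFlip x h).2 with hπ'
  set i₀ := lgvI x.2 h with hi₀
  set j₀ := lgvJ x.2 h with hj₀
  set z := lgvX x.2 h with hz
  set a := lgvPre (π i₀) z with ha
  set b := lgvPost (π i₀) z with hb
  set c := lgvPre (π j₀) z with hc
  set d := lgvPost (π j₀) z with hd
  have hIsplit : π i₀ = a ++ z :: b := (lgv_split_I x h).1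
  have hzna : z ∉ a := (lgv_split_I x h).2
  have hJsplit : π j₀ = c ++ z :: d := (lgv_split_J x h).1
  have hznc : z ∉ c := (lgv_split_J x h).2
  have hij : i₀ < j₀ := lgvI_lt_lgvJ x.2 h
  have hne : i₀ ≠ j₀ := hij.ne
  have hπ'I : π' i₀ = a ++ z :: d := lgvFlip_apply_I x h
  have hπ'J : π' j₀ = c ++ z :: b := lgvFlip_apply_J x h
  have hπ'o : ∀ k, k ≠ i₀ → k ≠ j₀ → π' k = π k := fun k h1 h2 => lgvFlip_apply_other x h h1 h2
  -- membership helpers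
  have hca : ∀ {y : V}, y ∈ a → y ∈ π i₀ := fun hy => by
    rw [hIsplit]; exact List.mem_append_left _ hy
  have hcb : ∀ {y : V}, y ∈ b → y ∈ π i₀ := fun hy => by
    rw [hIsplit]; exact List.mem_append_right _ (List.mem_cons_of_mem _ hy)
  have hcz : z ∈ π i₀ := lgvX_mem x.2 h
  have hcc : ∀ {y : V}, y ∈ c → y ∈ π j₀ := fun hy => by
    rw [hJsplit]; exact List.mem_append_left _ hy
  have hcd : ∀ {y : V}, y ∈ d → y ∈ π j₀ := fun hy => by
    rw [hJsplit]; exact List.mem_append_right _ (List.mem_cons_of_mem _ hy)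
  have hcz' : z ∈ π j₀ := (lgvJ_spec x.2 h).2
  have hsub : ∀ (y : V) (j : Fin n), y ∈ π' j → y ∈ π j ∨ y ∈ π i₀ ∨ y ∈ π j₀ := by
    intro y j hy
    by_cases hji : j = i₀
    · subst hji
      rw [hπ'I] at hy
      simp only [List.mem_append, List.mem_cons] at hy
      rcases hy with h1 | h1 | h1
      · exact Or.inr (Or.inl (hca h1))
      · exact Or.inr (Or.inl (h1 ▸ hcz))
      · exact Or.inr (Or.inr (hcd h1))
    · by_cases hjj : j = j₀
      · subst hjj
        rw [hπ'J] at hy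
        simp only [List.mem_append, List.mem_cons] at hy
        rcases hy with h1 | h1 | h1
        · exact Or.inl (hcc h1)
        · exact Or.inl (h1 ▸ hcz')
        · exact Or.inr (Or.inl (hcb h1))
      · rw [hπ'o j hji hjj] at hy
        exact Or.inl hy
  have hlow : ∀ i, i < i₀ → ¬ lgvMeets π i := by
    intro i hi hm
    exact absurd (lgvI_min x.2 h hm) (not_le.2 hi)
  have step1 : ∀ i, lgvMeets π' i → i₀ ≤ i := by
    intro i hm
    by_contra hlt
    push_neg at hlt
    obtain ⟨y, hyi, j, hji, hyj⟩ := hm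
    have hii : i ≠ i₀ := hlt.ne
    have hij' : i ≠ j₀ := (hlt.trans hij).ne
    rw [hπ'o i hii hij'] at hyi
    rcases hsub y j hyj with hy | hy | hy
    · exact hlow i hlt ⟨y, hyi, j, hji, hy⟩
    · exact hlow i hlt ⟨y, hyi, i₀, fun e => hii e.symm, hy⟩
    · exact hlow i hlt ⟨y, hyi, j₀, fun e => hij' e.symm, hy⟩
  have step2 : lgvMeets π' i₀ := by
    refine ⟨z, by rw [hπ'I]; simp, j₀, (lgvJ_spec x.2 h).1, by rw [hπ'J]; simp⟩
  have hI' : lgvI π' (lgvFlip_bad x h) = i₀ :=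
    le_antisymm (lgvI_min π' (lgvFlip_bad x h) step2) (step1 _ (lgvI_meets π' (lgvFlip_bad x h)))
  have hprefix : ∀ y ∈ a, ¬ ∃ j, j ≠ i₀ ∧ y ∈ π' j := by
    rintro y hy ⟨j, hji, hyj⟩
    have hfirst := lgvX_first x.2 h
    by_cases hjj : j = j₀
    · subst hjj
      rw [hπ'J] at hyj
      simp only [List.mem_append, List.mem_cons] at hyj
      rcases hyj with h1 | h1 | h1
      · exact hfirst y hy ⟨j₀, hji, hcc h1⟩
      · exact hzna (h1 ▸ hy)
      · have hnd2 : (a ++ z :: b).Nodup := by rw [← hIsplit]; exact hnd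
        rcases List.nodup_append.1 hnd2 with ⟨-, -, hdisj⟩
        exact hdisj y hy y (List.mem_cons_of_mem _ h1) rfl
    · rw [hπ'o j hji hjj] at hyj
      exact hfirst y hy ⟨j, hji, hyj⟩
  have hX' : lgvX π' (lgvFlip_bad x h) = z := by
    have hfind := lgvX_find π' (lgvFlip_bad x h)
    rw [hI'] at hfind
    have hfind2 : (π' i₀).find? (fun y => decide (∃ j, j ≠ i₀ ∧ y ∈ π' j)) = some z := by
      rw [List.find?_eq_some_iff_append]
      refine ⟨?_, a, d, hπ'I, fun y hy => ?_⟩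
      · simp only [decide_eq_true_eq]
        exact ⟨j₀, (lgvJ_spec x.2 h).1, by rw [hπ'J]; simp⟩
      · simpa using hprefix y hy
    rw [hfind2] at hfind
    exact (Option.some_inj.1 hfind).symm
  have hJ' : lgvJ π' (lgvFlip_bad x h) = j₀ := by
    refine le_antisymm ?_ ?_
    · refine lgvJ_min π' (lgvFlip_bad x h) (by rw [hI']; exact (lgvJ_spec x.2 h).1) ?_
      rw [hX', hπ'J]; simp
    · obtain ⟨hne', hmem'⟩ := lgvJ_spec π' (lgvFlip_bad x h)
      rw [hI'] at hne'
      rw [hX'] at hmem'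
      by_cases hjj : lgvJ π' (lgvFlip_bad x h) = j₀
      · exact le_of_eq hjj.symm
      · rw [hπ'o _ hne' hjj] at hmem'
        exact lgvJ_min x.2 h hne' hmem'
  exact ⟨hI', hX', hJ'⟩

lemma lgvFlip_invol (x : Σ _ : Equiv.Perm (Fin n), Fin n → List V)
    (h : ∃ i, lgvMeets x.2 i) (hnd : (x.2 (lgvI x.2 h)).Nodup) :
    lgvFlip (lgvFlip x h) (lgvFlip_bad x h) = x := by
  classical
  obtain ⟨hI', hX', hJ'⟩ := lgvFlip_stable x h hnd
  set π := x.2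
  set π' := (lgvFlip x h).2 with hπ'
  set i₀ := lgvI x.2 h
  set j₀ := lgvJ x.2 h
  set z := lgvX x.2 h
  have hIsplit : π i₀ = lgvPre (π i₀) z ++ z :: lgvPost (π i₀) z := (lgv_split_I x h).1
  have hzna : z ∉ lgvPre (π i₀) z := (lgv_split_I x h).2
  have hJsplit : π j₀ = lgvPre (π j₀) z ++ z :: lgvPost (π j₀) z := (lgv_split_J x h).1
  have hznc : z ∉ lgvPre (π j₀) z := (lgv_split_J x h).2
  have hne : i₀ ≠ j₀ := (lgvI_lt_lgvJ x.2 h).ne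
  have hπ'I : π' i₀ = lgvPre (π i₀) z ++ z :: lgvPost (π j₀) z := lgvFlip_apply_I x h
  have hπ'J : π' j₀ = lgvPre (π j₀) z ++ z :: lgvPost (π i₀) z := lgvFlip_apply_J x h
  have hpre'I : lgvPre (π' i₀) z = lgvPre (π i₀) z ∧ lgvPost (π' i₀) z = lgvPost (π j₀) z := by
    rw [hπ'I]; exact lgv_split_unique _ hzna
  have hpre'J : lgvPre (π' j₀) z = lgvPre (π j₀) z ∧ lgvPost (π' j₀) z = lgvPost (π i₀) z := by
    rw [hπ'J]; exact lgv_split_unique _ hznc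
  refine Sigma.ext ?_ ?_
  · show x.1 * Equiv.swap i₀ j₀ * Equiv.swap (lgvI π' (lgvFlip_bad x h)) (lgvJ π' (lgvFlip_bad x h)) = x.1
    rw [hI', hJ', mul_assoc, Equiv.swap_mul_self, mul_one]
  · refine heq_of_eq (funext fun k => ?_)
    show Function.update (Function.update π' (lgvI π' (lgvFlip_bad x h))
        (lgvPre (π' (lgvI π' (lgvFlip_bad x h))) (lgvX π' (lgvFlip_bad x h))
          ++ lgvX π' (lgvFlip_bad x h) :: lgvPost (π' (lgvJ π' (lgvFlip_bad x h))) (lgvX π' (lgvFlip_bad x h))))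
      (lgvJ π' (lgvFlip_bad x h))
      (lgvPre (π' (lgvJ π' (lgvFlip_bad x h))) (lgvX π' (lgvFlip_bad x h))
        ++ lgvX π' (lgvFlip_bad x h) :: lgvPost (π' (lgvI π' (lgvFlip_bad x h))) (lgvX π' (lgvFlip_bad x h))) k
      = π k
    rw [hI', hJ', hX']
    rw [hpre'I.1, hpre'I.2, hpre'J.1, hpre'J.2]
    by_cases hkj : k = j₀
    · subst hkj
      rw [Function.update_self, ← hJsplit]
    · rw [Function.update_of_ne hkj]
      by_cases hki : k = i₀
      · subst hki
        rw [Function.update_self, ← hIsplit]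
      · rw [Function.update_of_ne hki]
        exact lgvFlip_apply_other x h hki hkj
end
/-- The Lindström–Gessel–Viennot lemma: in a finite directed acyclic graph with edge
weights `w`, if the starting points `u₁,…,uₙ` and endpoints `v₁,…,vₙ` are
`G`-compatible (whenever `α < α'` and `β' < β`, every path `u_α → v_β` shares a vertex
with every path `u_{α'} → v_{β'}`), then the total weight of all families of pairwise
vertex-disjoint paths `πᵢ : uᵢ → vᵢ` equals `det(p(uᵢ, vⱼ))`, where
`p(u,v) = ∑_{π : u → v} w(π)`. -/
theorem lindstrom_gessel_viennot {V : Type*} [Fintype V] [DecidableEq V]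
    (Adj : V → V → Prop) (hacyclic : ∀ x, ¬Relation.TransGen Adj x x)
    (w : V → V → ℂ) (n : ℕ) (u v : Fin n → V)
    (hcompat : ∀ (α α' β β' : Fin n), α < α' → β' < β → ∀ lp lq : List V,
      IsDirPath Adj (u α) (v β) lp → IsDirPath Adj (u α') (v β') lq →
      ∃ x, x ∈ lp ∧ x ∈ lq) :
    (∑' π : {π : Fin n → List V // (∀ i, IsDirPath Adj (u i) (v i) (π i)) ∧
        ∀ i j, i ≠ j → ∀ x ∈ π i, x ∉ π j},
      ∏ i, dirPathWeight w (π.1 i))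
      = Matrix.det (Matrix.of fun i j : Fin n =>
          ∑' l : {l : List V // IsDirPath Adj (u i) (v j) l}, dirPathWeight w l.1) := by
  classical
  -- finiteness of path sets
  have hfin : ∀ a b : V, {l : List V | IsDirPath Adj a b l}.Finite := by
    intro a b
    refine Set.Finite.subset (List.finite_length_le V (Fintype.card V)) ?_
    intro l hl
    exact (lgv_nodup hacyclic hl.2.2.2).length_le_card
  letI instF : ∀ a b : V, Fintype {l : List V // IsDirPath Adj a b l} :=
    fun a b => (hfin a b).fintype
  have hentry : ∀ a b : V,
      (∑' l : {l : List V // IsDirPath Adj a b l}, dirPathWeight w l.1)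
        = ∑ l ∈ (hfin a b).toFinset, dirPathWeight w l := by
    intro a b
    rw [tsum_fintype]
    exact (Finset.sum_subtype _ (fun l => (hfin a b).mem_toFinset) _).symm
  -- the big index set and weight function
  set S : Finset (Σ _ : Equiv.Perm (Fin n), Fin n → List V) :=
    Finset.univ.sigma (fun σ => Fintype.piFinset (fun i => (hfin (u i) (v (σ i))).toFinset))
    with hS
  set F : (Σ _ : Equiv.Perm (Fin n), Fin n → List V) → ℂ :=
    fun x => ((Equiv.Perm.sign x.1 : ℤ) : ℂ) * ∏ i, dirPathWeight w (x.2 i) with hF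
  have hSmem : ∀ x : Σ _ : Equiv.Perm (Fin n), Fin n → List V,
      x ∈ S ↔ ∀ i, IsDirPath Adj (u i) (v (x.1 i)) (x.2 i) := by
    intro x
    simp [hS, Finset.mem_sigma, Fintype.mem_piFinset, Set.Finite.mem_toFinset]
  -- determinant expansion
  have hdet : Matrix.det (Matrix.of fun i j : Fin n =>
        ∑' l : {l : List V // IsDirPath Adj (u i) (v j) l}, dirPathWeight w l.1)
      = ∑ x ∈ S, F x := by
    have h1 : (Matrix.of fun i j : Fin n =>
          ∑' l : {l : List V // IsDirPath Adj (u i) (v j) l}, dirPathWeight w l.1)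
        = Matrix.of fun i j : Fin n => ∑ l ∈ (hfin (u i) (v j)).toFinset, dirPathWeight w l :=
      congrArg Matrix.of (funext fun i => funext fun j => hentry _ _)
    rw [h1, ← Matrix.det_transpose, Matrix.det_apply]
    have h2 : ∀ σ : Equiv.Perm (Fin n),
        (∏ i, (Matrix.of fun i j : Fin n =>
            ∑ l ∈ (hfin (u i) (v j)).toFinset, dirPathWeight w l).transpose (σ i) i)
          = ∑ p ∈ Fintype.piFinset (fun i => (hfin (u i) (v (σ i))).toFinset),
              ∏ i, dirPathWeight w (p i) := by
      intro σ
      simp only [Matrix.transpose_apply, Matrix.of_apply]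
      exact Finset.prod_univ_sum _ _
    calc ∑ σ : Equiv.Perm (Fin n), Equiv.Perm.sign σ •
            ∏ i, (Matrix.of fun i j : Fin n =>
              ∑ l ∈ (hfin (u i) (v j)).toFinset, dirPathWeight w l).transpose (σ i) i
        = ∑ σ : Equiv.Perm (Fin n),
            ∑ p ∈ Fintype.piFinset (fun i => (hfin (u i) (v (σ i))).toFinset),
              ((Equiv.Perm.sign σ : ℤ) : ℂ) * ∏ i, dirPathWeight w (p i) := by
          refine Finset.sum_congr rfl fun σ _ => ?_
          rw [h2 σ, Finset.smul_sum]
          refine Finset.sum_congr rfl fun p _ => ?_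
          simp [Units.smul_def, zsmul_eq_mul]
      _ = ∑ x ∈ S, F x := by
          rw [hS, Finset.sum_sigma]
  rw [hdet]
  -- the bad (intersecting) families cancel
  have hbadzero : ∑ x ∈ S.filter (fun x => ∃ i, lgvMeets x.2 i), F x = 0 := by
    refine Finset.sum_involution
      (fun x hx => lgvFlip x (Finset.mem_filter.1 hx).2) ?_ ?_ ?_ ?_
    · -- F x + F (flip x) = 0
      intro x hx
      obtain ⟨hxS, hbad⟩ := Finset.mem_filter.1 hx
      have hne : lgvI x.2 hbad ≠ lgvJ x.2 hbad := (lgvI_lt_lgvJ x.2 hbad).ne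
      have hsgn : Equiv.Perm.sign (lgvFlip x hbad).1 = - Equiv.Perm.sign x.1 := by
        rw [lgvFlip_fst, Equiv.Perm.sign_mul, Equiv.Perm.sign_swap hne]
        exact mul_neg_one _
      have hprod := lgvFlip_prod w x hbad
      simp only [hF, hsgn, hprod]
      push_cast
      ring
    · -- no fixed points
      intro x hx _
      obtain ⟨hxS, hbad⟩ := Finset.mem_filter.1 hx
      intro heq
      have h1 : (lgvFlip x hbad).1 = x.1 := congrArg Sigma.fst heq
      rw [lgvFlip_fst] at h1
      have h2 : x.1 * Equiv.swap (lgvI x.2 hbad) (lgvJ x.2 hbad) = x.1 * 1 := by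
        rw [mul_one]; exact h1
      exact (lgvI_lt_lgvJ x.2 hbad).ne (Equiv.swap_eq_one_iff.1 (mul_left_cancel h2))
    · -- flip stays in the bad set
      intro x hx
      obtain ⟨hxS, hbad⟩ := Finset.mem_filter.1 hx
      refine Finset.mem_filter.2 ⟨(hSmem _).2 ?_, lgvFlip_bad x hbad⟩
      exact lgvFlip_valid x hbad ((hSmem x).1 hxS)
    · -- involution
      intro x hx
      obtain ⟨hxS, hbad⟩ := Finset.mem_filter.1 hx
      have hval := (hSmem x).1 hxS
      have hnd : (x.2 (lgvI x.2 hbad)).Nodup :=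
        lgv_nodup hacyclic (hval (lgvI x.2 hbad)).2.2.2
      exact lgvFlip_invol x hbad hnd
  have hsplit := Finset.sum_filter_add_sum_filter_not S (fun x => ∃ i, lgvMeets x.2 i) F
  rw [← hsplit, hbadzero, zero_add]
  -- in a disjoint family the permutation is the identity
  have hgoodid : ∀ x ∈ S.filter (fun x => ¬ ∃ i, lgvMeets x.2 i), x.1 = 1 := by
    intro x hx
    obtain ⟨hxS, hgood⟩ := Finset.mem_filter.1 hx
    have hval := (hSmem x).1 hxS
    by_contra hne1
    haveI : WellFoundedLT (Fin n) := inferInstance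
    have hnsm : ¬ StrictMono ⇑x.1 := by
      intro hsm
      have : ⇑x.1 = id := (hsm.range_inj strictMono_id).1
        (by rw [Equiv.range_eq_univ, Set.range_id])
      exact hne1 (Equiv.ext fun a => congrFun this a)
    rw [StrictMono] at hnsm
    push_neg at hnsm
    obtain ⟨i, j, hij, hle⟩ := hnsm
    have hlt : x.1 j < x.1 i :=
      lt_of_le_of_ne hle (fun e => hij.ne' (x.1.injective e))
    obtain ⟨y, hy1, hy2⟩ := hcompat i j (x.1 i) (x.1 j) hij hlt (x.2 i) (x.2 j)
      (hval i) (hval j)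
    exact hgood ⟨i, y, hy1, j, hij.ne', hy2⟩
  -- identify the good families with the tsum on the left
  letI instFam : Fintype {π : Fin n → List V // (∀ i, IsDirPath Adj (u i) (v i) (π i)) ∧
      ∀ i j, i ≠ j → ∀ x ∈ π i, x ∉ π j} := by
    refine Set.Finite.fintype (s := {π : Fin n → List V | (∀ i, IsDirPath Adj (u i) (v i) (π i)) ∧
      ∀ i j, i ≠ j → ∀ x ∈ π i, x ∉ π j}) ?_
    refine Set.Finite.subset (Set.Finite.pi (fun i => hfin (u i) (v i))) ?_
    intro π hπ
    simp only [Set.mem_pi, Set.mem_univ, forall_true_left]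
    exact fun i => hπ.1 i
  rw [tsum_fintype]
  rw [← Finset.sum_subtype (p := fun π : Fin n → List V =>
      (∀ i, IsDirPath Adj (u i) (v i) (π i)) ∧ ∀ i j, i ≠ j → ∀ x ∈ π i, x ∉ π j)
      ((Set.Finite.subset (Set.Finite.pi (fun i => hfin (u i) (v i)))
        (fun π hπ => by
          simp only [Set.mem_pi, Set.mem_univ, forall_true_left]
          exact fun i => hπ.1 i)).toFinset)
      (fun π => Set.Finite.mem_toFinset _) (fun π => ∏ i, dirPathWeight w (π i))]
  -- now a bijection between the good finset and the family finset
  refine Finset.sum_bij' (i := fun π _ => (⟨1, π⟩ : Σ _ : Equiv.Perm (Fin n), Fin n → List V))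
    (j := fun x _ => x.2) ?_ ?_ ?_ ?_ ?_
  · intro π hπ
    replace hπ := (Set.Finite.mem_toFinset _).1 hπ
    refine Finset.mem_filter.2 ⟨(hSmem _).2 ?_, ?_⟩
    · intro i
      simpa using hπ.1 i
    · rintro ⟨i, y, hy1, j, hji, hy2⟩
      exact hπ.2 i j (fun e => hji e.symm) y hy1 hy2
  · intro x hx
    obtain ⟨hxS, hgood⟩ := Finset.mem_filter.1 hx
    have hval := (hSmem x).1 hxS
    have hid := hgoodid x hx
    refine (Set.Finite.mem_toFinset _).2 ⟨fun i => ?_, fun i j hij y hy1 hy2 => ?_⟩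
    · have := hval i
      rw [hid] at this
      simpa using this
    · exact hgood ⟨i, y, hy1, j, fun e => hij e.symm, hy2⟩
  · intro π hπ; rfl
  · intro x hx
    have hid := hgoodid x hx
    exact Sigma.ext hid.symm (heq_of_eq rfl)
  · intro π hπ
    simp [hF]
end
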